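/- arXiv:1204.1761 — 5 statements merged into one kernel-verified Lean document; each statement's English description precedes it below -/
import Mathlib

section
/- For any x ∈ ℝ and any a = (a₁, a₂, …) in the unit sphere of ℓ², letting a⁽ⁿ⁾ := (a₁, …, aₙ, 0, 0, …)/√(a₁² + ⋯ + aₙ²) (defined for all n large enough that a₁² + ⋯ + aₙ² > 0), one has liminf_{n→∞} P(a⁽ⁿ⁾·ε ≥ x) ≥ P(a·ε ≥ x). -/
open MeasureTheory ProbabilityTheory Filter

/-- The standard normal tail function. -/
noncomputable def normalTail (x : ℝ) : ℝ :=
  ∫ u in Set.Ici x, (Real.sqrt (2 * Real.pi))⁻¹ * Real.exp (-u ^ 2 / 2)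

/-- `ε` is a sequence of independent Rademacher random variables on `(Ω, μ)`. -/
def IsRademacherSeq {Ω : Type*} [MeasurableSpace Ω] (μ : Measure Ω) (ε : ℕ → Ω → ℝ) : Prop :=
  (∀ i, Measurable (ε i)) ∧ iIndepFun ε μ ∧
    ∀ i, μ {ω | ε i ω = 1} = 1/2 ∧ μ {ω | ε i ω = -1} = 1/2

/-- `P(a·ε ≥ x)`, where `a·ε` is the a.s. limit of the partial sums `∑_{i<n} aᵢ εᵢ`. -/
noncomputable def tailProb {Ω : Type*} [MeasurableSpace Ω] (μ : Measure Ω) (ε : ℕ → Ω → ℝ)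
    (a : ℕ → ℝ) (x : ℝ) : ℝ :=
  (μ {ω | ∃ s, x ≤ s ∧
      Tendsto (fun n => ∑ i ∈ Finset.range n, a i * ε i ω) atTop (nhds s)}).toReal

/-- `P(eₙ·ε ≥ x) = P((ε₁+⋯+εₙ)/√n ≥ x)`. -/
noncomputable def eqTail {Ω : Type*} [MeasurableSpace Ω] (μ : Measure Ω) (ε : ℕ → Ω → ℝ)
    (n : ℕ) (x : ℝ) : ℝ :=
  (μ {ω | x ≤ (∑ i ∈ Finset.range n, ε i ω) / Real.sqrt n}).toReal

/-- `P(f_{n,t}·ε ≥ x)` where `f_{n,t}·ε = √((1-t²)/n)(ε₁+⋯+εₙ) + t ε_{n+1}`. -/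
noncomputable def fTail {Ω : Type*} [MeasurableSpace Ω] (μ : Measure Ω) (ε : ℕ → Ω → ℝ)
    (n : ℕ) (t x : ℝ) : ℝ :=
  (μ {ω | x ≤ Real.sqrt ((1 - t ^ 2) / n) * (∑ i ∈ Finset.range n, ε i ω) + t * ε n ω}).toReal

/-- The maximal tail `M(x)`: supremum of `P(a·ε ≥ x)` over the unit sphere of `ℓ²`. -/
noncomputable def Mtail {Ω : Type*} [MeasurableSpace Ω] (μ : Measure Ω) (ε : ℕ → Ω → ℝ)
    (x : ℝ) : ℝ :=
  sSup {p | ∃ a : ℕ → ℝ, (∑' i, (a i) ^ 2) = 1 ∧ p = tailProb μ ε a x}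

/-- `M⁼(x) = sup_{n ≥ 1} P(eₙ·ε ≥ x)`. -/
noncomputable def Meq {Ω : Type*} [MeasurableSpace Ω] (μ : Measure Ω) (ε : ℕ → Ω → ℝ)
    (x : ℝ) : ℝ :=
  sSup {p | ∃ n : ℕ, 1 ≤ n ∧ p = eqTail μ ε n x}

/-- `Mₙ(x)`: supremum over unit vectors supported on the first `n` coordinates. -/
noncomputable def Mn {Ω : Type*} [MeasurableSpace Ω] (μ : Measure Ω) (ε : ℕ → Ω → ℝ)
    (n : ℕ) (x : ℝ) : ℝ :=
  sSup {p | ∃ a : ℕ → ℝ, (∑' i, (a i) ^ 2) = 1 ∧ (∀ i, n ≤ i → a i = 0) ∧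
    p = tailProb μ ε a x}

/-- `M⁼ₙ(x) = max_{1 ≤ j ≤ n} P(e_j·ε ≥ x)`. -/
noncomputable def Meqn {Ω : Type*} [MeasurableSpace Ω] (μ : Measure Ω) (ε : ℕ → Ω → ℝ)
    (n : ℕ) (x : ℝ) : ℝ :=
  sSup {p | ∃ j : ℕ, 1 ≤ j ∧ j ≤ n ∧ p = eqTail μ ε j x}

lemma tailProb_trunc {Ω : Type*} [MeasurableSpace Ω] (μ : Measure Ω) (ε : ℕ → Ω → ℝ)
    (a : ℕ → ℝ) (x : ℝ) (n : ℕ) :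
    tailProb μ ε
        (fun i => (if i < n then a i else 0) / Real.sqrt (∑ j ∈ Finset.range n, (a j) ^ 2)) x
      = (μ {ω | x ≤ (∑ i ∈ Finset.range n, a i * ε i ω)
          / Real.sqrt (∑ j ∈ Finset.range n, (a j) ^ 2)}).toReal := by
  unfold tailProb
  congr 2
  ext ω
  set c := Real.sqrt (∑ j ∈ Finset.range n, (a j) ^ 2) with hc
  have hps : ∀ m, n ≤ m →
      (∑ i ∈ Finset.range m, (if i < n then a i else 0) / c * ε i ω)
        = (∑ i ∈ Finset.range n, a i * ε i ω) / c := by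
    intro m hm
    rw [Finset.sum_div]
    rw [← Finset.sum_subset (Finset.range_subset_range.2 hm)
      (fun i _ hi => by rw [if_neg fun h => hi (Finset.mem_range.2 h)]; simp)]
    refine Finset.sum_congr rfl fun i hi => ?_
    rw [Finset.mem_range] at hi
    rw [if_pos hi]
    ring
  have htd : Tendsto (fun m => ∑ i ∈ Finset.range m, (if i < n then a i else 0) / c * ε i ω)
      atTop (nhds ((∑ i ∈ Finset.range n, a i * ε i ω) / c)) := by
    refine Tendsto.congr' ?_ tendsto_const_nhds
    filter_upwards [eventually_ge_atTop n] with m hm using (hps m hm).symm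
  simp only [Set.mem_setOf_eq]
  constructor
  · rintro ⟨s, hxs, hs⟩
    rwa [tendsto_nhds_unique hs htd] at hxs
  · intro h; exact ⟨_, h, htd⟩

noncomputable def rsgn (b : Bool) : ℝ := if b then 1 else -1

lemma rsgn_abs_sub_le (u v : Bool) : |rsgn u - rsgn v| ≤ 2 := by
  cases u <;> cases v <;> norm_num [rsgn]

lemma rsgn_abs_sub_eq {u v : Bool} (h : u ≠ v) : |rsgn u - rsgn v| = 2 := by
  cases u <;> cases v <;> simp_all [rsgn] <;> norm_num

lemma rademacher_limit_atom_zero {Ω : Type*} [mΩ : MeasurableSpace Ω] (μ : Measure Ω)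
    [IsProbabilityMeasure μ] (ε : ℕ → Ω → ℝ) (hε : IsRademacherSeq μ ε)
    (a : ℕ → ℝ) (hinf : {i | a i ≠ 0}.Infinite) (h0 : Tendsto a atTop (nhds 0)) (x : ℝ) :
    μ {ω | Tendsto (fun n => ∑ i ∈ Finset.range n, a i * ε i ω) atTop (nhds x)} = 0 := by
  classical
  obtain ⟨hmeas, hindep, hhalf⟩ := hε
  set E0 : Set Ω :=
    {ω | Tendsto (fun n => ∑ i ∈ Finset.range n, a i * ε i ω) atTop (nhds x)} with hE0def
  -- the good set where all ε i take values ±1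
  set G : Set Ω := {ω | ∀ i, ε i ω = 1 ∨ ε i ω = -1} with hGdef
  have hGc : μ Gᶜ = 0 := by
    have h1 : ∀ i, μ {ω | ¬ (ε i ω = 1 ∨ ε i ω = -1)} = 0 := by
      intro i
      have hU : MeasurableSet {ω | ε i ω = 1} := (hmeas i) (measurableSet_singleton 1)
      have hV : MeasurableSet {ω | ε i ω = -1} := (hmeas i) (measurableSet_singleton (-1))
      have hd : Disjoint {ω | ε i ω = 1} {ω | ε i ω = -1} := by
        rw [Set.disjoint_left]
        intro ω h1 h2
        simp only [Set.mem_setOf_eq] at h1 h2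
        rw [h1] at h2; norm_num at h2
      have huv : μ ({ω | ε i ω = 1} ∪ {ω | ε i ω = -1}) = 1 := by
        rw [measure_union hd hV, (hhalf i).1, (hhalf i).2, ← ENNReal.add_halves 1]
        norm_num
      have : {ω | ¬ (ε i ω = 1 ∨ ε i ω = -1)} = ({ω | ε i ω = 1} ∪ {ω | ε i ω = -1})ᶜ := by
        ext ω; simp [Set.mem_union]
      rw [this, prob_compl_eq_zero_iff (hU.union hV)]
      exact huv
    have : Gᶜ = ⋃ i, {ω | ¬ (ε i ω = 1 ∨ ε i ω = -1)} := by
      ext ω; simp [hGdef]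
    rw [this]
    exact measure_iUnion_null fun i => h1 i
  -- construction of the rapidly decreasing subsequence φ
  have habs : Tendsto (fun i => |a i|) atTop (nhds 0) := by
    have := h0.abs; simpa using this
  have hstep : ∀ p : ℕ, a p ≠ 0 → ∃ i, p < i ∧ a i ≠ 0 ∧ |a i| < |a p| / 2 := by
    intro p hp
    have hpos : 0 < |a p| / 2 := by positivity
    have h1 : ∀ᶠ i in atTop, |a i| < |a p| / 2 := habs.eventually_lt_const hpos
    obtain ⟨M, hM⟩ := eventually_atTop.1 h1
    obtain ⟨i, hi1, hi2⟩ := (hinf.diff (Set.finite_Iic (max p M))).nonempty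
    have hgt : max p M < i := by
      by_contra hle
      exact hi2 (Set.mem_Iic.2 (not_lt.1 hle))
    exact ⟨i, lt_of_le_of_lt (le_max_left _ _) hgt, hi1,
      hM i (le_of_lt (lt_of_le_of_lt (le_max_right _ _) hgt))⟩
  choose! F hF using hstep
  obtain ⟨i0, hi0⟩ := hinf.nonempty
  set φ : ℕ → ℕ := fun k => F^[k] i0 with hφdef
  have hφsucc : ∀ j, φ (j+1) = F (φ j) := fun j => Function.iterate_succ_apply' F j i0
  have hφz : ∀ j, a (φ j) ≠ 0 := by
    intro j; induction j with
    | zero => simpa [hφdef] using hi0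
    | succ j ih => rw [hφsucc j]; exact (hF _ ih).2.1
  have hφlt : ∀ j, φ j < φ (j+1) := fun j => by rw [hφsucc j]; exact (hF _ (hφz j)).1
  have hφmono : StrictMono φ := strictMono_nat_of_lt_succ hφlt
  have hφhalf : ∀ j, |a (φ (j+1))| < |a (φ j)| / 2 := fun j => by
    rw [hφsucc j]; exact (hF _ (hφz j)).2.2
  have hφpos : ∀ j, 0 < |a (φ j)| := fun j => abs_pos.2 (hφz j)
  -- geometric decay bound
  have hgeom : ∀ j k, j + 1 ≤ k →
      ∑ l ∈ Finset.Ico (j+1) k, |a (φ l)| ≤ |a (φ j)| - |a (φ (k-1))| := by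
    intro j k hk
    induction k, hk using Nat.le_induction with
    | base => simp
    | succ k hk ih =>
      rw [Finset.sum_Ico_succ_top hk]
      have h2 : |a (φ k)| < |a (φ (k-1))| / 2 := by
        obtain ⟨k', rfl⟩ : ∃ k', k = k' + 1 := ⟨k-1, by omega⟩
        simpa using hφhalf k'
      have hk1 : k + 1 - 1 = k := by omega
      rw [hk1]
      linarith
  have hgeom' : ∀ j k, ∑ l ∈ Finset.Ico (j+1) k, |a (φ l)| < |a (φ j)| := by
    intro j k
    rcases le_or_gt k (j+1) with h | h
    · rw [Finset.Ico_eq_empty (by omega)]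
      simpa using hφpos j
    · calc ∑ l ∈ Finset.Ico (j+1) k, |a (φ l)| ≤ |a (φ j)| - |a (φ (k-1))| :=
          hgeom j k (by omega)
        _ < |a (φ j)| := by have := hφpos (k-1); linarith
  -- key bound
  have key : ∀ k : ℕ, μ E0 ≤ (1/2 : ENNReal) ^ k := by
    intro k
    set s : Finset ℕ := Finset.image φ (Finset.range k) with hsdef
    have hcard : s.card = k := by
      rw [hsdef, Finset.card_image_of_injective _ hφmono.injective, Finset.card_range]
    set cv : (ℕ → Bool) → ℝ := fun b => ∑ i ∈ s, a i * rsgn (b i) with hcvdef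
    set P : ℕ → Ω → ℝ := fun n ω => ∑ i ∈ Finset.range n \ s, a i * ε i ω with hPdef
    set A : (ℕ → Bool) → Set Ω := fun b => ⋂ i ∈ (s : Set ℕ), {ω | ε i ω = rsgn (b i)} with hAdef
    set D : (ℕ → Bool) → Set Ω :=
      fun b => {ω | Tendsto (fun n => P n ω) atTop (nhds (x - cv b))} with hDdef
    set extb : ({i // i ∈ s} → Bool) → (ℕ → Bool) :=
      fun σ i => if h : i ∈ s then σ ⟨i, h⟩ else true with hextdef
    -- injectivity of the sign-sum
    have hcinj : ∀ b b' : ℕ → Bool, (∃ j, j < k ∧ b j ≠ b' j) →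
        (∑ j ∈ Finset.range k, a (φ j) * rsgn (b j))
          ≠ ∑ j ∈ Finset.range k, a (φ j) * rsgn (b' j) := by
      intro b b' hex heq
      set m := Nat.find hex with hmdef
      obtain ⟨hmk, hmne⟩ : m < k ∧ b m ≠ b' m := Nat.find_spec hex
      have hmin : ∀ j, j < m → b j = b' j := by
        intro j hj
        by_contra hne
        exact absurd ⟨by omega, hne⟩ (Nat.find_min hex hj)
      have hdiff : ∑ j ∈ Finset.range k, a (φ j) * (rsgn (b j) - rsgn (b' j)) = 0 := by
        simp only [mul_sub]
        rw [Finset.sum_sub_distrib, heq, sub_self]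
      rw [← Finset.sum_range_add_sum_Ico _ (le_of_lt hmk)] at hdiff
      have h1 : ∑ j ∈ Finset.range m, a (φ j) * (rsgn (b j) - rsgn (b' j)) = 0 :=
        Finset.sum_eq_zero fun j hj => by
          rw [hmin j (Finset.mem_range.1 hj)]; ring
      rw [h1, zero_add, Finset.sum_eq_sum_Ico_succ_bot hmk] at hdiff
      have h2 : |a (φ m) * (rsgn (b m) - rsgn (b' m))| = 2 * |a (φ m)| := by
        rw [abs_mul, rsgn_abs_sub_eq hmne]; ring
      have h3 : |∑ j ∈ Finset.Ico (m+1) k, a (φ j) * (rsgn (b j) - rsgn (b' j))|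
          ≤ 2 * ∑ j ∈ Finset.Ico (m+1) k, |a (φ j)| := by
        calc |∑ j ∈ Finset.Ico (m+1) k, a (φ j) * (rsgn (b j) - rsgn (b' j))|
            ≤ ∑ j ∈ Finset.Ico (m+1) k, |a (φ j) * (rsgn (b j) - rsgn (b' j))| :=
              Finset.abs_sum_le_sum_abs _ _
          _ ≤ ∑ j ∈ Finset.Ico (m+1) k, |a (φ j)| * 2 :=
              Finset.sum_le_sum fun j _ => by
                rw [abs_mul]
                exact mul_le_mul_of_nonneg_left (rsgn_abs_sub_le _ _) (abs_nonneg _)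
          _ = 2 * ∑ j ∈ Finset.Ico (m+1) k, |a (φ j)| := by
              rw [Finset.mul_sum]
              exact Finset.sum_congr rfl fun j _ => mul_comm _ _
      have h4 := hgeom' m k
      have h5 : |a (φ m) * (rsgn (b m) - rsgn (b' m))|
          = |∑ j ∈ Finset.Ico (m+1) k, a (φ j) * (rsgn (b j) - rsgn (b' j))| := by
        have h6 : a (φ m) * (rsgn (b m) - rsgn (b' m))
            = - ∑ j ∈ Finset.Ico (m+1) k, a (φ j) * (rsgn (b j) - rsgn (b' j)) := by
          linarith
        rw [h6, abs_neg]
      rw [h2] at h5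
      linarith
    -- measure of A
    have hμA : ∀ bb : ℕ → Bool, μ (A bb) = (1/2 : ENNReal)^k := by
      intro bb
      have hmb : ∀ i ∈ s, MeasurableSet[(Real.measurableSpace).comap (ε i)]
          {ω | ε i ω = rsgn (bb i)} :=
        fun i _ => ⟨{rsgn (bb i)}, measurableSet_singleton _, by ext ω; simp⟩
      have hAeq : A bb = ⋂ i ∈ s, {ω | ε i ω = rsgn (bb i)} := by
        rw [hAdef]; simp
      rw [hAeq, hindep.meas_biInter hmb]
      have hv : ∀ i ∈ s, μ {ω | ε i ω = rsgn (bb i)} = 1/2 := by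
        intro i _
        cases hbi : bb i
        · simpa [rsgn, hbi] using (hhalf i).2
        · simpa [rsgn, hbi] using (hhalf i).1
      rw [Finset.prod_congr rfl hv, Finset.prod_const, hcard]
    -- independence of the two blocks
    set M1 : MeasurableSpace Ω :=
      ⨆ i ∈ (s : Set ℕ), MeasurableSpace.comap (ε i) Real.measurableSpace with hM1def
    set M2 : MeasurableSpace Ω :=
      ⨆ i ∈ (s : Set ℕ)ᶜ, MeasurableSpace.comap (ε i) Real.measurableSpace with hM2def
    have hIndep : Indep M1 M2 μ :=
      indep_biSup_compl (fun n => (hmeas n).comap_le) hindep.iIndep (s : Set ℕ)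
    have hA_M1 : ∀ bb, MeasurableSet[M1] (A bb) := by
      intro bb
      rw [hAdef]
      refine MeasurableSet.biInter s.countable_toSet fun i hi => ?_
      have h1 : MeasurableSet[MeasurableSpace.comap (ε i) Real.measurableSpace]
          {ω | ε i ω = rsgn (bb i)} := ⟨{rsgn (bb i)}, measurableSet_singleton _, by ext ω; simp⟩
      exact (le_biSup (fun i => MeasurableSpace.comap (ε i) Real.measurableSpace) hi) _ h1
    have hεM2 : ∀ i, i ∉ s → Measurable[M2] (ε i) := by
      intro i hi
      rw [measurable_iff_comap_le]
      exact le_biSup (fun i => MeasurableSpace.comap (ε i) Real.measurableSpace)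
        (by simpa using hi)
    have hP_M2 : ∀ n, Measurable[M2] (P n) := by
      intro n
      rw [hPdef]
      refine Finset.measurable_sum _ fun i hi => ?_
      exact ((hεM2 i (Finset.mem_sdiff.1 hi).2).const_mul (a i))
    have hD_M2 : ∀ bb, MeasurableSet[M2] (D bb) := by
      intro bb
      have hDeq : D bb = ⋂ q : ℕ, ⋃ N : ℕ, ⋂ n, ⋂ (_ : N ≤ n),
          {ω | |P n ω - (x - cv bb)| ≤ 1/((q:ℝ)+1)} := by
        rw [hDdef]
        ext ω
        simp only [Set.mem_iInter, Set.mem_iUnion, Set.mem_setOf_eq]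
        constructor
        · intro h q
          have hq : (0:ℝ) < 1/((q:ℝ)+1) := by positivity
          obtain ⟨N, hN⟩ := (Metric.tendsto_atTop.1 h) _ hq
          refine ⟨N, fun n hn => ?_⟩
          have h' := hN n hn
          rw [Real.dist_eq] at h'
          exact le_of_lt h'
        · intro h
          rw [Metric.tendsto_atTop]
          intro δ hδ
          obtain ⟨q, hq⟩ := exists_nat_one_div_lt hδ
          obtain ⟨N, hN⟩ := h q
          refine ⟨N, fun n hn => ?_⟩
          rw [Real.dist_eq]
          exact lt_of_le_of_lt (hN n hn) hq
      rw [hDeq]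
      refine MeasurableSet.iInter fun q => ?_
      refine MeasurableSet.iUnion fun N => ?_
      refine MeasurableSet.iInter fun n => ?_
      refine MeasurableSet.iInter fun _ => ?_
      exact measurableSet_le (((hP_M2 n).sub measurable_const).abs) measurable_const
    have hM2le : M2 ≤ mΩ := iSup₂_le fun i _ => (hmeas i).comap_le
    have hD_amb : ∀ bb, MeasurableSet[mΩ] (D bb) := fun bb => hM2le _ (hD_M2 bb)
    have hmul : ∀ bb, μ (A bb ∩ D bb) = μ (A bb) * μ (D bb) := fun bb =>
      (Indep_iff M1 M2 μ).1 hIndep _ _ (hA_M1 bb) (hD_M2 bb)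
    -- covering
    have hcover : E0 ∩ G ⊆ ⋃ σ : {i // i ∈ s} → Bool, (A (extb σ) ∩ D (extb σ)) := by
      rintro ω ⟨hω, hg⟩
      set bb : ℕ → Bool := extb (fun i => if ε (↑i) ω = 1 then true else false) with hbbdef
      have hbval : ∀ i ∈ s, ε i ω = rsgn (bb i) := by
        intro i hi
        rw [hbbdef, hextdef]
        simp only [dif_pos hi]
        rcases hg i with h1 | h1
        · norm_num [rsgn, h1]
        · norm_num [rsgn, h1]
      refine Set.mem_iUnion.2 ⟨fun i => if ε (↑i) ω = 1 then true else false, ?_, ?_⟩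
      · rw [hAdef]
        exact Set.mem_iInter₂.2 fun i hi => hbval i hi
      · rw [hDdef]
        have hcveq : ∑ i ∈ s, a i * ε i ω = cv bb := by
          rw [hcvdef]
          exact Finset.sum_congr rfl fun i hi => by rw [hbval i hi]
        have hev : ∀ᶠ n in atTop, (∑ i ∈ Finset.range n, a i * ε i ω) - cv bb = P n ω := by
          filter_upwards [eventually_gt_atTop (s.sup id)] with n hn
          have hsub : s ⊆ Finset.range n := fun i hi =>
            Finset.mem_range.2 (lt_of_le_of_lt (Finset.le_sup (f := id) hi) hn)
          rw [hPdef, ← hcveq, ← Finset.sum_sdiff hsub, add_sub_cancel_right]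
        exact Set.mem_setOf_eq ▸ ((hω.sub_const (cv bb)).congr' hev)
    -- disjointness
    have hdisj : Pairwise (Function.onFun Disjoint fun σ : {i // i ∈ s} → Bool => D (extb σ)) := by
      intro σ τ hst
      have hrwcv : ∀ b2 : ℕ → Bool,
          cv b2 = ∑ j ∈ Finset.range k, a (φ j) * rsgn (b2 (φ j)) := by
        intro b2
        rw [hcvdef, hsdef]
        exact Finset.sum_image fun x _ y _ h => hφmono.injective h
      have hne : cv (extb σ) ≠ cv (extb τ) := by
        obtain ⟨i, hi⟩ := Function.ne_iff.1 hst
        have hmem : (i : ℕ) ∈ Finset.image φ (Finset.range k) := by rw [← hsdef]; exact i.2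
        obtain ⟨j, hj, hji⟩ := Finset.mem_image.1 hmem
        rw [hrwcv, hrwcv]
        refine hcinj _ _ ⟨j, Finset.mem_range.1 hj, ?_⟩
        have hmem2 : φ j ∈ s := by rw [hji]; exact i.2
        have h1 : extb σ (φ j) = σ i := by
          show (if h : φ j ∈ s then σ ⟨φ j, h⟩ else true) = σ i
          rw [dif_pos hmem2]
          congr 1
          exact Subtype.ext hji
        have h2 : extb τ (φ j) = τ i := by
          show (if h : φ j ∈ s then τ ⟨φ j, h⟩ else true) = τ i
          rw [dif_pos hmem2]
          congr 1
          exact Subtype.ext hji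
        rw [h1, h2]
        exact hi
      refine Set.disjoint_left.2 fun ω h1 h2 => hne ?_
      rw [hDdef] at h1 h2
      have := tendsto_nhds_unique h1 h2
      linarith
    -- put everything together
    calc μ E0 ≤ μ ((⋃ σ : {i // i ∈ s} → Bool, (A (extb σ) ∩ D (extb σ))) ∪ Gᶜ) := by
          refine measure_mono fun ω hω => ?_
          by_cases hg : ω ∈ G
          · exact Or.inl (hcover ⟨hω, hg⟩)
          · exact Or.inr hg
      _ ≤ μ (⋃ σ : {i // i ∈ s} → Bool, (A (extb σ) ∩ D (extb σ))) + μ Gᶜ :=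
          measure_union_le _ _
      _ = μ (⋃ σ : {i // i ∈ s} → Bool, (A (extb σ) ∩ D (extb σ))) := by rw [hGc, add_zero]
      _ ≤ ∑' σ : {i // i ∈ s} → Bool, μ (A (extb σ) ∩ D (extb σ)) := measure_iUnion_le _
      _ = ∑ σ : {i // i ∈ s} → Bool, μ (A (extb σ) ∩ D (extb σ)) := tsum_fintype _
      _ = ∑ σ : {i // i ∈ s} → Bool, (1/2 : ENNReal)^k * μ (D (extb σ)) :=
          Finset.sum_congr rfl fun σ _ => by rw [hmul, hμA]
      _ = (1/2 : ENNReal)^k * ∑ σ : {i // i ∈ s} → Bool, μ (D (extb σ)) := by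
          rw [Finset.mul_sum]
      _ = (1/2 : ENNReal)^k * μ (⋃ σ : {i // i ∈ s} → Bool, D (extb σ)) := by
          have hiu : μ (⋃ σ : {i // i ∈ s} → Bool, D (extb σ))
              = ∑ σ : {i // i ∈ s} → Bool, μ (D (extb σ)) := by
            exact (measure_iUnion (μ := μ) hdisj fun σ => hD_amb _).trans (tsum_fintype _)
          rw [hiu]
      _ ≤ (1/2 : ENNReal)^k * 1 := by exact mul_le_mul' le_rfl prob_le_one
      _ = (1/2 : ENNReal)^k := mul_one _
  -- conclude
  have htend : Tendsto (fun k : ℕ => (1/2 : ENNReal)^k) atTop (nhds 0) :=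
    ENNReal.tendsto_pow_atTop_nhds_zero_of_lt_one
      (ENNReal.half_lt_self one_ne_zero ENNReal.one_ne_top)
  exact le_zero_iff.1 (ge_of_tendsto' htend key)

theorem rademacher_truncation_liminf {Ω : Type*} [MeasurableSpace Ω] (μ : MeasureTheory.Measure Ω)
    [MeasureTheory.IsProbabilityMeasure μ] (ε : ℕ → Ω → ℝ) (hε : IsRademacherSeq μ ε)
    (x : ℝ) (a : ℕ → ℝ) (ha : (∑' i, (a i) ^ 2) = 1) :
    tailProb μ ε a x ≤
      Filter.liminf (fun n =>
        tailProb μ ε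
          (fun i => (if i < n then a i else 0) / Real.sqrt (∑ j ∈ Finset.range n, (a j) ^ 2)) x)
        Filter.atTop := by
  classical
  obtain ⟨hmeas, hindep, hhalf⟩ := hε
  have hsumm : Summable (fun i => a i ^ 2) := by
    by_contra h
    rw [tsum_eq_zero_of_not_summable h] at ha
    norm_num at ha
  have hS1 : Tendsto (fun n => ∑ j ∈ Finset.range n, a j ^ 2) atTop (nhds 1) := by
    have := hsumm.hasSum.tendsto_sum_nat
    rwa [ha] at this
  set T : ℕ → Ω → ℝ := fun n ω => ∑ i ∈ Finset.range n, a i * ε i ω with hTdef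
  set B : ℕ → Set Ω := fun n =>
    {ω | x ≤ T n ω / Real.sqrt (∑ j ∈ Finset.range n, a j ^ 2)} with hBdef
  have hrw : liminf (fun n => tailProb μ ε
        (fun i => (if i < n then a i else 0) / Real.sqrt (∑ j ∈ Finset.range n, (a j) ^ 2)) x)
          atTop
      = liminf (fun n => (μ (B n)).toReal) atTop :=
    liminf_congr (Eventually.of_forall fun n => tailProb_trunc μ ε a x n)
  rw [hrw]
  set L := liminf (fun n => (μ (B n)).toReal) atTop with hLdef
  have hgb : ∀ n, (μ (B n)).toReal ≤ 1 := fun n => by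
    rw [← ENNReal.toReal_one]
    exact ENNReal.toReal_mono ENNReal.one_ne_top prob_le_one
  have hcob : IsCoboundedUnder (· ≥ ·) atTop (fun n => (μ (B n)).toReal) :=
    isCoboundedUnder_ge_of_le atTop hgb
  have hL0 : 0 ≤ L := le_liminf_of_le hcob (Eventually.of_forall fun n => ENNReal.toReal_nonneg)
  set C : ℕ → Set Ω := fun N => ⋂ n, ⋂ (_ : N ≤ n), B n with hCdef
  have hCB : ∀ N n, N ≤ n → C N ⊆ B n := fun N n hn => Set.iInter₂_subset n hn
  have hCL : ∀ N, μ (C N) ≤ ENNReal.ofReal L := by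
    intro N
    have h1 : (μ (C N)).toReal ≤ L := by
      refine le_liminf_of_le hcob ?_
      filter_upwards [eventually_ge_atTop N] with n hn
      exact ENNReal.toReal_mono (measure_ne_top μ _) (measure_mono (hCB N n hn))
    exact (ENNReal.le_ofReal_iff_toReal_le (measure_ne_top μ _) hL0).2 h1
  have hmonoC : Monotone C := by
    intro N M hNM
    exact fun ω hω => Set.mem_iInter₂.2 fun n hn =>
      (Set.mem_iInter₂.1 hω) n (le_trans hNM hn)
  have hdir : Directed (· ⊆ ·) C := hmonoC.directed_le
  have hsqrt : Tendsto (fun n => Real.sqrt (∑ j ∈ Finset.range n, a j ^ 2)) atTop (nhds 1) := by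
    have h1 := (Real.continuous_sqrt.tendsto 1).comp hS1
    rwa [Real.sqrt_one] at h1
  have hE' : {ω | ∃ s, x < s ∧ Tendsto (fun n => T n ω) atTop (nhds s)} ⊆ ⋃ N, C N := by
    rintro ω ⟨s, hxs, hts⟩
    have hdiv : Tendsto (fun n => T n ω / Real.sqrt (∑ j ∈ Finset.range n, a j ^ 2))
        atTop (nhds (s / 1)) := hts.div hsqrt one_ne_zero
    rw [div_one] at hdiv
    obtain ⟨N, hN⟩ := eventually_atTop.1 (hdiv.eventually_const_lt hxs)
    exact Set.mem_iUnion.2 ⟨N, Set.mem_iInter₂.2 fun n hn => le_of_lt (hN n hn)⟩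
  suffices hfinal : μ {ω | ∃ s, x ≤ s ∧ Tendsto (fun n => T n ω) atTop (nhds s)}
      ≤ ENNReal.ofReal L by
    show (μ {ω | ∃ s, x ≤ s ∧ Tendsto (fun n => T n ω) atTop (nhds s)}).toReal ≤ L
    calc (μ {ω | ∃ s, x ≤ s ∧ Tendsto (fun n => T n ω) atTop (nhds s)}).toReal
        ≤ (ENNReal.ofReal L).toReal :=
          ENNReal.toReal_mono ENNReal.ofReal_ne_top hfinal
      _ = L := ENNReal.toReal_ofReal hL0
  have hUC : μ (⋃ N, C N) ≤ ENNReal.ofReal L := by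
    rw [hdir.measure_iUnion]
    exact iSup_le hCL
  by_cases hfin : ∃ N, ∀ i, N ≤ i → a i = 0
  · -- finitely supported case
    obtain ⟨N0, hN0⟩ := hfin
    have hsub : {ω | ∃ s, x ≤ s ∧ Tendsto (fun n => T n ω) atTop (nhds s)} ⊆ ⋃ N, C N := by
      rintro ω ⟨s, hxs, hts⟩
      rcases lt_or_eq_of_le hxs with h | h
      · exact hE' ⟨s, h, hts⟩
      · have hconst : ∀ n, N0 ≤ n → T n ω = T N0 ω := by
          intro n hn
          refine (Finset.sum_subset (Finset.range_subset_range.2 hn) fun i _ hi => ?_).symm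
          rw [hN0 i (not_lt.1 fun hc => hi (Finset.mem_range.2 hc)), zero_mul]
        have hTlim : Tendsto (fun n => T n ω) atTop (nhds (T N0 ω)) := by
          refine Tendsto.congr' ?_ tendsto_const_nhds
          filter_upwards [eventually_ge_atTop N0] with n hn using (hconst n hn).symm
        have hxT : T N0 ω = s := tendsto_nhds_unique hTlim hts
        have hSn : ∀ n, N0 ≤ n → (∑ j ∈ Finset.range n, a j ^ 2) = 1 := by
          intro n hn
          rw [← ha]
          refine (tsum_eq_sum fun i hi => ?_).symm
          rw [hN0 i (le_trans hn (not_lt.1 fun hc => hi (Finset.mem_range.2 hc)))]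
          · ring
        refine Set.mem_iUnion.2 ⟨N0, Set.mem_iInter₂.2 fun n hn => ?_⟩
        show x ≤ T n ω / Real.sqrt (∑ j ∈ Finset.range n, a j ^ 2)
        rw [hSn n hn, Real.sqrt_one, div_one, hconst n hn, hxT, ← h]
    exact le_trans (measure_mono hsub) hUC
  · -- infinitely supported case
    push_neg at hfin
    have hinf : {i | a i ≠ 0}.Infinite := by
      by_contra h
      rw [Set.not_infinite] at h
      obtain ⟨N, hN⟩ := h.bddAbove
      obtain ⟨i, hi1, hi2⟩ := hfin (N + 1)
      have := hN hi2
      omega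
    have h0 : Tendsto a atTop (nhds 0) := by
      have h1 := (Real.continuous_sqrt.tendsto 0).comp hsumm.tendsto_atTop_zero
      rw [Real.sqrt_zero] at h1
      exact (tendsto_zero_iff_abs_tendsto_zero a).2
        (h1.congr fun i => Real.sqrt_sq_eq_abs _)
    have hE0 : μ {ω | Tendsto (fun n => T n ω) atTop (nhds x)} = 0 :=
      rademacher_limit_atom_zero μ ε ⟨hmeas, hindep, hhalf⟩ a hinf h0 x
    have hsub : {ω | ∃ s, x ≤ s ∧ Tendsto (fun n => T n ω) atTop (nhds s)}
        ⊆ (⋃ N, C N) ∪ {ω | Tendsto (fun n => T n ω) atTop (nhds x)} := by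
      rintro ω ⟨s, hxs, hts⟩
      rcases lt_or_eq_of_le hxs with h | h
      · exact Or.inl (hE' ⟨s, h, hts⟩)
      · exact Or.inr (by rw [h]; exact hts)
    calc μ {ω | ∃ s, x ≤ s ∧ Tendsto (fun n => T n ω) atTop (nhds s)}
        ≤ μ ((⋃ N, C N) ∪ {ω | Tendsto (fun n => T n ω) atTop (nhds x)}) := measure_mono hsub
      _ ≤ μ (⋃ N, C N) + μ {ω | Tendsto (fun n => T n ω) atTop (nhds x)} := measure_union_le _ _
      _ = μ (⋃ N, C N) := by rw [hE0, add_zero]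
      _ ≤ ENNReal.ofReal L := hUC
end

section
/- If there exist x ∈ ℝ and a in the unit sphere of ℓ² with P(a·ε ≥ x) > M⁼(x), then there exist n ∈ ℕ and b in the unit sphere of ℓ² supported on the first n coordinates with P(b·ε ≥ x) > M⁼ₙ(x), where M⁼ₙ(x) := max_{1 ≤ j ≤ n} P(e_j·ε ≥ x). In other words, a counterexample to the infinite-dimensional Edelman conjecture yields a counterexample to the finite-dimensional conjecture. -/
open MeasureTheory ProbabilityTheory Filter

-- helper: measurability of tendsto-to-fixed-point set wrt arbitrary sigma-algebra
lemma measurableSet_tendsto_fixed {α : Type*} {m' : MeasurableSpace α} (f : ℕ → α → ℝ)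
    (hf : ∀ n, Measurable[m'] (f n)) (y : ℝ) :
    MeasurableSet[m'] {ω | Tendsto (fun n => f n ω) atTop (nhds y)} := by
  have hset : {ω | Tendsto (fun n => f n ω) atTop (nhds y)} =
      ⋂ k : ℕ, ⋃ N : ℕ, ⋂ n : ℕ, {ω | N ≤ n → dist (f n ω) y < ((k : ℝ) + 1)⁻¹} := by
    ext ω
    simp only [Set.mem_setOf_eq, Set.mem_iInter, Set.mem_iUnion, Metric.tendsto_atTop]
    constructor
    · intro h k
      obtain ⟨N, hN⟩ := h (((k : ℝ) + 1)⁻¹) (by positivity)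
      exact ⟨N, fun n hn => hN n hn⟩
    · intro h e he
      obtain ⟨k, hk⟩ := exists_nat_one_div_lt he
      obtain ⟨N, hN⟩ := h k
      refine ⟨N, fun n hn => lt_trans (hN n hn) ?_⟩
      rwa [one_div] at hk
  rw [hset]
  refine MeasurableSet.iInter fun k => MeasurableSet.iUnion fun N => MeasurableSet.iInter fun n => ?_
  by_cases hn : N ≤ n
  · simp only [hn, forall_true_left]
    exact measurableSet_lt ((hf n).dist measurable_const) measurable_const
  · simp only [hn, false_implies]
    · simpa using MeasurableSet.univ

lemma geom_decay (c : ℕ → ℝ) (hc : ∀ k, |c (k + 1)| * 2 ≤ |c k|) :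
    ∀ d k, (∑ l ∈ Finset.Ico (k + 1) (k + 1 + d), |c l|) + |c (k + d)| ≤ |c k| := by
  intro d
  induction d with
  | zero => intro k; simp
  | succ d ih =>
    intro k
    have h1 : k + 1 ≤ k + 1 + d := by omega
    have h2 : k + 1 + (d + 1) = (k + 1 + d) + 1 := by omega
    rw [h2, Finset.sum_Ico_succ_top h1]
    have h3 := hc (k + d)
    have h4 := ih k
    have h5 : k + 1 + d = k + d + 1 := by omega
    have h6 : k + (d + 1) = k + d + 1 := by omega
    rw [h5] at h4 ⊢
    rw [h6]
    linarith

lemma sum_tail_lt (c : ℕ → ℝ) (hc : ∀ k, |c (k + 1)| * 2 ≤ |c k|) (hc0 : ∀ k, c k ≠ 0) :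
    ∀ m k, (∑ l ∈ Finset.Ico (k + 1) m, |c l|) < |c k| := by
  intro m k
  rcases le_or_gt m (k + 1) with h | h
  · rw [Finset.Ico_eq_empty (by omega)]
    simpa using abs_pos.mpr (hc0 k)
  · obtain ⟨d, rfl⟩ : ∃ d, m = k + 1 + d := ⟨m - k - 1, by omega⟩
    have h4 := geom_decay c hc d k
    have h5 := abs_pos.mpr (hc0 (k + d))
    linarith

lemma signed_sum_inj (c : ℕ → ℝ) (hc : ∀ k, |c (k + 1)| * 2 ≤ |c k|) (hc0 : ∀ k, c k ≠ 0)
    (m : ℕ) {s t : Finset ℕ} (hs : s ⊆ Finset.range m) (ht : t ⊆ Finset.range m)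
    (h : (∑ k ∈ Finset.range m, (if k ∈ s then c k else -c k)) =
      ∑ k ∈ Finset.range m, (if k ∈ t then c k else -c k)) : s = t := by
  by_contra hne
  set g : ℕ → ℝ := fun k => (if k ∈ s then c k else -c k) - (if k ∈ t then c k else -c k) with hg
  have hsum : ∑ k ∈ Finset.range m, g k = 0 := by
    rw [Finset.sum_sub_distrib, h, sub_self]
  have hW : ∃ k, k ∈ (Finset.range m).filter fun k => ¬(k ∈ s ↔ k ∈ t) := by
    by_contra hall
    push_neg at hall
    apply hne
    ext k
    by_cases hk : k ∈ Finset.range m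
    · have := hall k
      simp only [Finset.mem_filter, hk, true_and, not_not] at this
      tauto
    · exact ⟨fun hks => absurd (hs hks) hk, fun hkt => absurd (ht hkt) hk⟩
  set W := (Finset.range m).filter fun k => ¬(k ∈ s ↔ k ∈ t) with hWdef
  have hWne : W.Nonempty := hW
  set k0 := W.min' hWne with hk0
  have hk0W : k0 ∈ W := W.min'_mem hWne
  have hk0m : k0 ∈ Finset.range m := (Finset.mem_filter.mp hk0W).1
  have hd := (Finset.mem_filter.mp hk0W).2
  have hgk0 : |g k0| = 2 * |c k0| := by
    by_cases h1 : k0 ∈ s <;> by_cases h2 : k0 ∈ t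
    · exact absurd (iff_of_true h1 h2) hd
    · have he : g k0 = 2 * c k0 := by simp only [hg, h1, h2, if_true, if_false]; ring
      rw [he, abs_mul, abs_two]
    · have he : g k0 = -(2 * c k0) := by simp only [hg, h1, h2, if_true, if_false]; ring
      rw [he, abs_neg, abs_mul, abs_two]
    · exact absurd (iff_of_false h1 h2) hd
  have hbound : ∀ i ∈ (Finset.range m).erase k0, |g i| ≤ if k0 < i then 2 * |c i| else 0 := by
    intro i hi
    obtain ⟨hik0, him⟩ := Finset.mem_erase.mp hi
    by_cases hlt : k0 < i
    · simp only [hlt, if_true]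
      have h1 : |(if i ∈ s then c i else -c i)| = |c i| := by
        by_cases h' : i ∈ s <;> simp [h']
      have h2 : |(if i ∈ t then c i else -c i)| = |c i| := by
        by_cases h' : i ∈ t <;> simp [h']
      calc |g i| ≤ |(if i ∈ s then c i else -c i)| + |(if i ∈ t then c i else -c i)| :=
            abs_sub _ _
        _ = 2 * |c i| := by rw [h1, h2]; ring
    · -- i < k0, so i ∉ W, so g i = 0
      simp only [hlt, if_false]
      have hiW : i ∉ W := by
        intro hiW
        exact hlt (lt_of_le_of_ne (W.min'_le i hiW) (Ne.symm hik0))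
      have : (i ∈ s ↔ i ∈ t) := by
        by_contra hcon
        exact hiW (Finset.mem_filter.mpr ⟨him, hcon⟩)
      have : g i = 0 := by
        by_cases h' : i ∈ s
        · simp [hg, h', this.mp h']
        · have : i ∉ t := fun h'' => h' (this.mpr h'')
          simp [hg, h', this]
      rw [this, abs_zero]
  have hsum2 : g k0 + ∑ i ∈ (Finset.range m).erase k0, g i = 0 := by
    rw [Finset.add_sum_erase _ g hk0m, hsum]
  have habs : |∑ i ∈ (Finset.range m).erase k0, g i| < 2 * |c k0| := by
    calc |∑ i ∈ (Finset.range m).erase k0, g i| ≤ ∑ i ∈ (Finset.range m).erase k0, |g i| :=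
          Finset.abs_sum_le_sum_abs _ _
      _ ≤ ∑ i ∈ (Finset.range m).erase k0, (if k0 < i then 2 * |c i| else 0) :=
          Finset.sum_le_sum hbound
      _ = ∑ i ∈ ((Finset.range m).erase k0).filter (fun i => k0 < i), 2 * |c i| :=
          (Finset.sum_filter _ _).symm
      _ ≤ ∑ i ∈ Finset.Ico (k0 + 1) m, 2 * |c i| := by
          refine Finset.sum_le_sum_of_subset_of_nonneg ?_ (fun i _ _ => by positivity)
          intro i hi
          obtain ⟨hi1, hi2⟩ := Finset.mem_filter.mp hi
          obtain ⟨_, him⟩ := Finset.mem_erase.mp hi1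
          exact Finset.mem_Ico.mpr ⟨hi2, Finset.mem_range.mp him⟩
      _ = 2 * ∑ i ∈ Finset.Ico (k0 + 1) m, |c i| := by rw [Finset.mul_sum]
      _ < 2 * |c k0| := by
          have := sum_tail_lt c hc hc0 m k0
          linarith
  have : |g k0| = |∑ i ∈ (Finset.range m).erase k0, g i| := by
    rw [show g k0 = -(∑ i ∈ (Finset.range m).erase k0, g i) by linarith, abs_neg]
  rw [hgk0] at this
  linarith [this ▸ habs]

lemma atom_zero {Ω : Type*} [MeasurableSpace Ω] (μ : Measure Ω) [IsProbabilityMeasure μ]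
    (ε : ℕ → Ω → ℝ) (hε : IsRademacherSeq μ ε) (a : ℕ → ℝ)
    (hinf : {i | a i ≠ 0}.Infinite) (hto : Tendsto a atTop (nhds 0)) (x : ℝ) :
    μ {ω | Tendsto (fun n => ∑ i ∈ Finset.range n, a i * ε i ω) atTop (nhds x)} = 0 := by
  obtain ⟨hmeas, hindep, hhalf⟩ := hε
  -- picking small nonzero coefficients
  have pick : ∀ B : ℝ, 0 < B → ∃ i, a i ≠ 0 ∧ |a i| < B := by
    intro B hB
    have hev : ∀ᶠ i in atTop, |a i| < B := by
      have := Metric.tendsto_nhds.mp hto B hB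
      simpa [Real.dist_eq] using this
    obtain ⟨N, hN⟩ := eventually_atTop.mp hev
    obtain ⟨i, hi, hNi⟩ := hinf.exists_gt N
    exact ⟨i, hi, hN i (le_of_lt hNi)⟩
  have hTpick : ∀ p : {i // a i ≠ 0}, ∃ i, a i ≠ 0 ∧ |a i| < |a p.1| / 2 := by
    intro p
    have : 0 < |a p.1| := abs_pos.mpr p.2
    exact pick _ (by linarith)
  choose gf hg1 hg2 using hTpick
  obtain ⟨i0, hi0⟩ := hinf.nonempty
  set g : {i // a i ≠ 0} → {i // a i ≠ 0} := fun p => ⟨gf p, hg1 p⟩ with hgdef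
  set j : ℕ → ℕ := fun k => ((g^[k]) ⟨i0, hi0⟩).1 with hjdef
  set c : ℕ → ℝ := fun k => a (j k) with hcdef
  have hc0 : ∀ k, c k ≠ 0 := fun k => ((g^[k]) ⟨i0, hi0⟩).2
  have hcdec : ∀ k, |c (k + 1)| < |c k| / 2 := by
    intro k
    have hit : (g^[k + 1]) ⟨i0, hi0⟩ = g ((g^[k]) ⟨i0, hi0⟩) :=
      Function.iterate_succ_apply' g k _
    have h2 := hg2 ((g^[k]) ⟨i0, hi0⟩)
    have : c (k + 1) = a (gf ((g^[k]) ⟨i0, hi0⟩)) := by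
      exact congrArg a (congrArg Subtype.val hit)
    rw [this]
    exact h2
  have hc : ∀ k, |c (k + 1)| * 2 ≤ |c k| := fun k => by have := hcdec k; linarith
  have hanti : StrictAnti (fun k => |c k|) := by
    refine strictAnti_nat_of_succ_lt fun k => ?_
    have h1 := hcdec k
    have h2 := abs_nonneg (c k)
    linarith
  have hjinj : Function.Injective j := by
    intro k l hkl
    by_contra hne
    have hceq : c k = c l := by rw [hcdef]; simp only [hkl]
    rcases lt_or_gt_of_ne hne with h' | h'
    · exact absurd (congrArg abs hceq) (ne_of_gt (hanti h'))
    · exact absurd (congrArg abs hceq) (ne_of_lt (hanti h'))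
  set E := {ω | Tendsto (fun n => ∑ i ∈ Finset.range n, a i * ε i ω) atTop (nhds x)} with hEdef
  suffices hbd : ∀ m : ℕ, μ E ≤ (2⁻¹ : ENNReal) ^ m by
    refine le_antisymm ?_ (zero_le)
    have htend : Tendsto (fun m : ℕ => (2⁻¹ : ENNReal) ^ m) atTop (nhds 0) :=
      ENNReal.tendsto_pow_atTop_nhds_zero_of_lt_one (by simp [ENNReal.inv_lt_one])
    exact ge_of_tendsto' htend hbd
  intro m
  set Tset : Finset ℕ := (Finset.range m).image j with hTset
  have hTcard : Tset.card = m := by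
    rw [hTset, Finset.card_image_of_injective _ hjinj, Finset.card_range]
  set sgn : Finset ℕ → ℕ → ℝ := fun s k => if k ∈ s then 1 else -1 with hsgn
  set w : Finset ℕ → ℕ → ℝ := fun s => Function.extend j (sgn s) (fun _ => 1) with hwdef
  have hw : ∀ s k, w s (j k) = sgn s k := fun s k => hjinj.extend_apply _ _ k
  set G : Finset ℕ → Set Ω := fun s => ⋂ i ∈ Tset, ε i ⁻¹' {w s i} with hGdef
  set cshift : Finset ℕ → ℝ := fun s => ∑ k ∈ Finset.range m, sgn s k * c k with hcsdef
  set a' : ℕ → ℝ := fun i => if i ∈ Tset then 0 else a i with ha'def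
  set F : ℝ → Set Ω := fun y =>
    {ω | Tendsto (fun n => ∑ i ∈ Finset.range n, a' i * ε i ω) atTop (nhds y)} with hFdef
  set NN : Set Ω := ⋃ k ∈ Finset.range m, {ω | ε (j k) ω ≠ 1 ∧ ε (j k) ω ≠ -1} with hNN
  -- null bad set
  have hNnull : μ NN = 0 := by
    refine le_antisymm (le_trans (measure_biUnion_finset_le _ _) ?_) (zero_le)
    refine le_of_eq (Finset.sum_eq_zero fun k _ => ?_)
    have hms1 : MeasurableSet {ω | ε (j k) ω = 1} := hmeas (j k) (measurableSet_singleton 1)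
    have hms2 : MeasurableSet {ω | ε (j k) ω = -1} := hmeas (j k) (measurableSet_singleton (-1))
    have hset : {ω | ε (j k) ω ≠ 1 ∧ ε (j k) ω ≠ -1} =
        ({ω | ε (j k) ω = 1} ∪ {ω | ε (j k) ω = -1})ᶜ := by
      ext ω; simp [not_or]
    rw [hset, prob_compl_eq_zero_iff (hms1.union hms2), measure_union ?_ hms2,
      (hhalf (j k)).1, (hhalf (j k)).2, ENNReal.add_halves]
    refine Set.disjoint_left.mpr fun ω h1 h2 => ?_
    simp only [Set.mem_setOf_eq] at h1 h2
    rw [h1] at h2; norm_num at h2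
  -- coverage
  have hcover : E ⊆ NN ∪ ⋃ s ∈ (Finset.range m).powerset, (F (x - cshift s) ∩ G s) := by
    intro ω hω
    by_cases hNmem : ω ∈ NN
    · exact Or.inl hNmem
    right
    have hval : ∀ k ∈ Finset.range m, ε (j k) ω = 1 ∨ ε (j k) ω = -1 := by
      intro k hk
      by_contra hcon
      push_neg at hcon
      exact hNmem (Set.mem_biUnion hk ⟨hcon.1, hcon.2⟩)
    set s := (Finset.range m).filter (fun k => ε (j k) ω = 1) with hsdef
    have hs_pow : s ∈ (Finset.range m).powerset :=
      Finset.mem_powerset.mpr (Finset.filter_subset _ _)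
    have hsign : ∀ k ∈ Finset.range m, ε (j k) ω = sgn s k := by
      intro k hk
      by_cases h1 : ε (j k) ω = 1
      · have hks : k ∈ s := Finset.mem_filter.mpr ⟨hk, h1⟩
        rw [h1, hsgn]; simp [hks]
      · rcases hval k hk with h | h
        · exact absurd h h1
        · have hks : k ∉ s := fun hks => h1 (Finset.mem_filter.mp hks).2
          rw [h, hsgn]; simp [hks]
    refine Set.mem_biUnion hs_pow ⟨?_, ?_⟩
    · -- F membership
      have hdiff : ∀ᶠ n in atTop, (∑ i ∈ Finset.range n, a i * ε i ω) - cshift s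
          = (∑ i ∈ Finset.range n, a' i * ε i ω) := by
        filter_upwards [eventually_ge_atTop (Tset.sup id + 1)] with n hn
        have hsub : Tset ⊆ Finset.range n := fun i hi =>
          Finset.mem_range.mpr (by have := Finset.le_sup (f := id) hi; simp at this; omega)
        have h1 : (∑ i ∈ Finset.range n, a i * ε i ω) - (∑ i ∈ Finset.range n, a' i * ε i ω)
            = ∑ i ∈ Finset.range n, (if i ∈ Tset then a i * ε i ω else 0) := by
          rw [← Finset.sum_sub_distrib]
          refine Finset.sum_congr rfl fun i _ => ?_
          by_cases hi : i ∈ Tset <;> simp [ha'def, hi]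
        have h2 : ∑ i ∈ Finset.range n, (if i ∈ Tset then a i * ε i ω else 0)
            = ∑ i ∈ Tset, a i * ε i ω := by
          rw [Finset.sum_ite_mem, Finset.inter_eq_right.mpr hsub]
        have h3 : ∑ i ∈ Tset, a i * ε i ω = cshift s := by
          rw [hTset, Finset.sum_image (fun k _ l _ h => hjinj h)]
          refine Finset.sum_congr rfl fun k hk => ?_
          rw [hsign k hk]
          exact mul_comm _ _
        linarith [h1, h2, h3]
      have htend : Tendsto (fun n => (∑ i ∈ Finset.range n, a i * ε i ω) - cshift s) atTop
          (nhds (x - cshift s)) := hω.sub tendsto_const_nhds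
      exact htend.congr' hdiff
    · -- G membership
      simp only [hGdef, Set.mem_iInter]
      intro i hi
      obtain ⟨k, hk, rfl⟩ := Finset.mem_image.mp (by rwa [hTset] at hi)
      simp only [Set.mem_preimage, Set.mem_singleton_iff]
      rw [hw, ← hsign k hk]
  -- measurability of F (ambient)
  have hFmeas : ∀ y, MeasurableSet (F y) := fun y =>
    measurableSet_tendsto_fixed _ (fun n => Finset.measurable_sum _ fun i _ =>
      (hmeas i).const_mul _) y
  -- independence
  have hle : ∀ i : ℕ, MeasurableSpace.comap (ε i) Real.measurableSpace ≤ _ :=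
    fun i => measurable_iff_comap_le.mp (hmeas i)
  have hIndep : Indep (⨆ i ∈ (↑Tset : Set ℕ), MeasurableSpace.comap (ε i) Real.measurableSpace)
      (⨆ i ∈ (↑Tset : Set ℕ)ᶜ, MeasurableSpace.comap (ε i) Real.measurableSpace) μ :=
    indep_biSup_compl hle hindep.iIndep _
  have hGmeas1 : ∀ s, MeasurableSet[⨆ i ∈ (↑Tset : Set ℕ),
      MeasurableSpace.comap (ε i) Real.measurableSpace] (G s) := by
    intro s
    refine Finset.measurableSet_biInter _ fun i hi => ?_
    have h1 : MeasurableSet[MeasurableSpace.comap (ε i) Real.measurableSpace]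
        (ε i ⁻¹' {w s i}) := ⟨{w s i}, measurableSet_singleton _, rfl⟩
    exact (le_iSup₂ (f := fun (i : ℕ) (_ : i ∈ (↑Tset : Set ℕ)) =>
      MeasurableSpace.comap (ε i) Real.measurableSpace) i (by simpa using hi)) _ h1
  have hFmeas2 : ∀ y, MeasurableSet[⨆ i ∈ (↑Tset : Set ℕ)ᶜ,
      MeasurableSpace.comap (ε i) Real.measurableSpace] (F y) := by
    intro y
    refine measurableSet_tendsto_fixed _ (fun n => Finset.measurable_sum _ fun i _ => ?_) y
    by_cases hi : i ∈ Tset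
    · have : a' i = 0 := by simp [ha'def, hi]
      simp only [this, zero_mul]
      exact measurable_const
    · have hme : Measurable[⨆ i ∈ (↑Tset : Set ℕ)ᶜ,
          MeasurableSpace.comap (ε i) Real.measurableSpace] (ε i) := by
        intro t ht
        exact (le_iSup₂ (f := fun (i : ℕ) (_ : i ∈ (↑Tset : Set ℕ)ᶜ) =>
          MeasurableSpace.comap (ε i) Real.measurableSpace) i (by simpa using hi)) _ ⟨t, ht, rfl⟩
      exact hme.const_mul _
  have hprod : ∀ s y, μ (F y ∩ G s) = μ (F y) * μ (G s) := by
    intro s y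
    have := (Indep_iff _ _ _).mp hIndep (G s) (F y) (hGmeas1 s) (hFmeas2 y)
    rw [Set.inter_comm] at this
    rw [this, mul_comm]
  have hGprob : ∀ s, μ (G s) = (2⁻¹ : ENNReal) ^ m := by
    intro s
    have hmb : ∀ i ∈ Tset, MeasurableSet[Real.measurableSpace.comap (ε i)]
        (ε i ⁻¹' {w s i}) := fun i _ => ⟨{w s i}, measurableSet_singleton _, rfl⟩
    have hbi := hindep.meas_biInter (S := Tset) (s := fun i => ε i ⁻¹' {w s i}) hmb
    have hGeq : G s = ⋂ i ∈ Tset, ε i ⁻¹' {w s i} := rfl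
    rw [hGeq, hbi]
    have hval : ∀ i ∈ Tset, μ (ε i ⁻¹' {w s i}) = 2⁻¹ := by
      intro i hi
      obtain ⟨k, hk, rfl⟩ := Finset.mem_image.mp (by rwa [hTset] at hi)
      rw [hw]
      by_cases hks : k ∈ s
      · have h1 : sgn s k = 1 := by rw [hsgn]; simp [hks]
        rw [h1]
        have h2 : ε (j k) ⁻¹' {(1 : ℝ)} = {ω | ε (j k) ω = 1} := rfl
        rw [h2, (hhalf (j k)).1, one_div]
      · have h1 : sgn s k = -1 := by rw [hsgn]; simp [hks]
        rw [h1]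
        have h2 : ε (j k) ⁻¹' {(-1 : ℝ)} = {ω | ε (j k) ω = -1} := rfl
        rw [h2, (hhalf (j k)).2, one_div]
    rw [Finset.prod_congr rfl hval, Finset.prod_const, hTcard]
  have hinj2 : ∀ s ∈ (Finset.range m).powerset, ∀ t ∈ (Finset.range m).powerset,
      s ≠ t → cshift s ≠ cshift t := by
    intro s hs t ht hne heq
    apply hne
    refine signed_sum_inj c hc hc0 m (Finset.mem_powerset.mp hs) (Finset.mem_powerset.mp ht) ?_
    have hconv : ∀ (u : Finset ℕ) k, sgn u k * c k = if k ∈ u then c k else -c k := by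
      intro u k
      by_cases h' : k ∈ u <;> simp [hsgn, h']
    calc (∑ k ∈ Finset.range m, if k ∈ s then c k else -c k)
        = cshift s := by rw [hcsdef]; exact (Finset.sum_congr rfl fun k _ => hconv s k).symm
      _ = cshift t := heq
      _ = ∑ k ∈ Finset.range m, if k ∈ t then c k else -c k :=
          by rw [hcsdef]; exact Finset.sum_congr rfl fun k _ => hconv t k
  have hsum_le : ∑ s ∈ (Finset.range m).powerset, μ (F (x - cshift s)) ≤ 1 := by
    have hdisj : Set.PairwiseDisjoint ((Finset.range m).powerset : Set (Finset ℕ))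
        (fun s => F (x - cshift s)) := by
      intro s hs t ht hne
      have hy : x - cshift s ≠ x - cshift t := by
        intro h'
        exact hinj2 s (Finset.mem_coe.mp hs) t (Finset.mem_coe.mp ht) hne (by linarith)
      exact Set.disjoint_left.mpr fun ω h1 h2 => hy (tendsto_nhds_unique h1 h2)
    rw [← measure_biUnion_finset hdisj (fun s _ => hFmeas _)]
    exact le_trans (measure_mono (Set.subset_univ _)) (le_of_eq measure_univ)
  calc μ E ≤ μ (NN ∪ ⋃ s ∈ (Finset.range m).powerset, (F (x - cshift s) ∩ G s)) :=
        measure_mono hcover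
    _ ≤ μ NN + μ (⋃ s ∈ (Finset.range m).powerset, (F (x - cshift s) ∩ G s)) :=
        measure_union_le _ _
    _ = μ (⋃ s ∈ (Finset.range m).powerset, (F (x - cshift s) ∩ G s)) := by
        rw [hNnull, zero_add]
    _ ≤ ∑ s ∈ (Finset.range m).powerset, μ (F (x - cshift s) ∩ G s) :=
        measure_biUnion_finset_le _ _
    _ = ∑ s ∈ (Finset.range m).powerset, μ (F (x - cshift s)) * (2⁻¹ : ENNReal) ^ m := by
        refine Finset.sum_congr rfl fun s _ => ?_
        rw [hprod, hGprob]
    _ = (∑ s ∈ (Finset.range m).powerset, μ (F (x - cshift s))) * (2⁻¹ : ENNReal) ^ m := by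
        rw [Finset.sum_mul]
    _ ≤ 1 * (2⁻¹ : ENNReal) ^ m := mul_le_mul_left hsum_le _
    _ = (2⁻¹ : ENNReal) ^ m := one_mul _

section helpers
variable {Ω : Type*} [MeasurableSpace Ω] (μ : Measure Ω) [IsProbabilityMeasure μ]
  (ε : ℕ → Ω → ℝ)

lemma eqTail_nonneg (n : ℕ) (x : ℝ) : 0 ≤ eqTail μ ε n x := ENNReal.toReal_nonneg

lemma eqTail_le_one (n : ℕ) (x : ℝ) : eqTail μ ε n x ≤ 1 := by
  rw [eqTail, show (1:ℝ) = (μ Set.univ).toReal by simp]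
  exact ENNReal.toReal_mono (measure_ne_top _ _) (measure_mono (Set.subset_univ _))

lemma MeqSet_bdd (x : ℝ) : BddAbove {p | ∃ n : ℕ, 1 ≤ n ∧ p = eqTail μ ε n x} := by
  refine ⟨1, fun p hp => ?_⟩
  obtain ⟨n, _, rfl⟩ := hp
  exact eqTail_le_one μ ε n x

lemma Meqn_le_Meq {n : ℕ} (hn : 1 ≤ n) (x : ℝ) : Meqn μ ε n x ≤ Meq μ ε x := by
  refine csSup_le_csSup (MeqSet_bdd μ ε x) ⟨eqTail μ ε 1 x, 1, le_refl 1, hn, rfl⟩ ?_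
  rintro p ⟨j, h1, _, rfl⟩
  exact ⟨j, h1, rfl⟩

lemma Meq_nonneg (x : ℝ) : 0 ≤ Meq μ ε x :=
  le_trans (eqTail_nonneg μ ε 1 x) (le_csSup (MeqSet_bdd μ ε x) ⟨1, le_refl 1, rfl⟩)

lemma tailProb_of_finsupp (b : ℕ → ℝ) (n : ℕ) (hb : ∀ i, n ≤ i → b i = 0) (x : ℝ) :
    tailProb μ ε b x = (μ {ω | x ≤ ∑ i ∈ Finset.range n, b i * ε i ω}).toReal := by
  rw [tailProb]
  have hset : {ω | ∃ s, x ≤ s ∧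
      Tendsto (fun n => ∑ i ∈ Finset.range n, b i * ε i ω) atTop (nhds s)}
      = {ω | x ≤ ∑ i ∈ Finset.range n, b i * ε i ω} := by
    ext ω
    have hconst : ∀ᶠ k in atTop, (∑ i ∈ Finset.range n, b i * ε i ω)
        = ∑ i ∈ Finset.range k, b i * ε i ω := by
      filter_upwards [eventually_ge_atTop n] with k hk
      refine Finset.sum_subset (Finset.range_subset_range.mpr hk) fun i _ hi => ?_
      rw [hb i (by simpa using hi), zero_mul]
    have htc : Tendsto (fun k => ∑ i ∈ Finset.range k, b i * ε i ω) atTop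
        (nhds (∑ i ∈ Finset.range n, b i * ε i ω)) := tendsto_const_nhds.congr' hconst
    constructor
    · rintro ⟨s, hxs, hts⟩
      rwa [tendsto_nhds_unique hts htc] at hxs
    · intro hx
      exact ⟨_, hx, htc⟩
  rw [hset]

end helpers

theorem rademacher_infinite_counterexample_implies_finite {Ω : Type*} [MeasurableSpace Ω] (μ : MeasureTheory.Measure Ω)
    [MeasureTheory.IsProbabilityMeasure μ] (ε : ℕ → Ω → ℝ) (hε : IsRademacherSeq μ ε) (x : ℝ)
    (h : ∃ a : ℕ → ℝ, (∑' i, (a i) ^ 2) = 1 ∧ Meq μ ε x < tailProb μ ε a x) :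
    ∃ (n : ℕ) (b : ℕ → ℝ), (∑' i, (b i) ^ 2) = 1 ∧ (∀ i, n ≤ i → b i = 0) ∧
      Meqn μ ε n x < tailProb μ ε b x := by
  obtain ⟨a, ha1, ha2⟩ := h
  by_cases hfin : {i | a i ≠ 0}.Finite
  · obtain ⟨N, hN⟩ := hfin.bddAbove
    refine ⟨N + 1, a, ha1, fun i hi => ?_, lt_of_le_of_lt (Meqn_le_Meq μ ε (by omega) x) ha2⟩
    by_contra hne
    have := hN hne
    omega
  · have hinf : {i | a i ≠ 0}.Infinite := hfin
    have hsummable : Summable (fun i => a i ^ 2) := by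
      by_contra hs
      rw [tsum_eq_zero_of_not_summable hs] at ha1
      norm_num at ha1
    have hhs : HasSum (fun i => a i ^ 2) 1 := ha1 ▸ hsummable.hasSum
    have hps : Tendsto (fun n => ∑ i ∈ Finset.range n, a i ^ 2) atTop (nhds 1) :=
      hhs.tendsto_sum_nat
    have hto : Tendsto a atTop (nhds 0) := by
      have h2 : Tendsto (fun i => a i ^ 2) atTop (nhds 0) := hsummable.tendsto_atTop_zero
      have habs : Tendsto (fun i => |a i|) atTop (nhds 0) := by
        have h3 : Tendsto (fun i => Real.sqrt (a i ^ 2)) atTop (nhds (Real.sqrt 0)) :=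
          (Real.continuous_sqrt.tendsto 0).comp h2
        simpa [Real.sqrt_sq_eq_abs, Real.sqrt_zero] using h3
      exact (tendsto_zero_iff_abs_tendsto_zero a).mpr habs
    have hatom := atom_zero μ ε hε a hinf hto x
    by_contra hcon
    push_neg at hcon
    set v : ℕ → ℝ := fun n => ∑ i ∈ Finset.range n, a i ^ 2 with hv
    set cn : ℕ → ℝ := fun n => Real.sqrt (v n) with hcn
    have hcto : Tendsto cn atTop (nhds 1) := by
      have h4 := (Real.continuous_sqrt.tendsto 1).comp hps
      simpa [hcn, Real.sqrt_one, Function.comp_def] using h4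
    have hvev : ∀ᶠ n in atTop, (1:ℝ)/2 < v n :=
      hps.eventually (eventually_gt_nhds (by norm_num))
    obtain ⟨n₀, hn₀⟩ := eventually_atTop.mp hvev
    set S : ℕ → Ω → ℝ := fun n ω => ∑ i ∈ Finset.range n, a i * ε i ω with hS
    set B : ℕ → Set Ω := fun n => {ω | x * cn n ≤ S n ω} with hB
    have key : ∀ n, n₀ ≤ n → μ (B n) ≤ ENNReal.ofReal (Meq μ ε x) := by
      intro n hn
      have hvpos : 0 < v n := lt_trans (by norm_num) (hn₀ n hn)
      have hcpos : 0 < cn n := Real.sqrt_pos.mpr hvpos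
      have hn1 : 1 ≤ n := by
        by_contra hW
        push_neg at hW
        have hn0 : n = 0 := by omega
        rw [hn0] at hvpos
        simp [hv] at hvpos
      set b : ℕ → ℝ := fun i => if i < n then a i / cn n else 0 with hbdef
      have hbsupp : ∀ i, n ≤ i → b i = 0 := by
        intro i hi
        simp only [hbdef]
        exact if_neg (by omega)
      have hbsum : (∑' i, b i ^ 2) = 1 := by
        rw [tsum_eq_sum (s := Finset.range n) ?_]
        · have h5 : ∀ i ∈ Finset.range n, b i ^ 2 = a i ^ 2 / (cn n) ^ 2 := by
            intro i hi
            simp only [hbdef]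
            simp only [Finset.mem_range] at hi
            rw [if_pos hi, div_pow]
          rw [Finset.sum_congr rfl h5, ← Finset.sum_div, hcn, Real.sq_sqrt hvpos.le]
          exact div_self (ne_of_gt hvpos)
        · intro i hi
          rw [hbsupp i (by simpa using hi)]
          norm_num
      have htp : tailProb μ ε b x = (μ (B n)).toReal := by
        rw [tailProb_of_finsupp μ ε b n hbsupp x]
        have hseteq : {ω | x ≤ ∑ i ∈ Finset.range n, b i * ε i ω} = B n := by
          ext ω
          have hsum' : ∑ i ∈ Finset.range n, b i * ε i ω = (S n ω) / cn n := by
            rw [hS, Finset.sum_div]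
            refine Finset.sum_congr rfl fun i hi => ?_
            simp only [hbdef]
            rw [if_pos (Finset.mem_range.mp hi), div_mul_eq_mul_div]
          simp only [Set.mem_setOf_eq, hsum', hB]
          rw [le_div_iff₀ hcpos]
        rw [hseteq]
      have hlt := hcon n b hbsum hbsupp
      have h6 : (μ (B n)).toReal ≤ Meq μ ε x := by
        rw [← htp]
        exact le_trans hlt (Meqn_le_Meq μ ε hn1 x)
      exact (ENNReal.le_ofReal_iff_toReal_le (measure_ne_top _ _) (Meq_nonneg μ ε x)).mpr h6
    set A := {ω | ∃ s, x ≤ s ∧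
      Tendsto (fun n => ∑ i ∈ Finset.range n, a i * ε i ω) atTop (nhds s)} with hA
    set A' := {ω | ∃ s, x < s ∧
      Tendsto (fun n => ∑ i ∈ Finset.range n, a i * ε i ω) atTop (nhds s)} with hA'
    set E := {ω | Tendsto (fun n => ∑ i ∈ Finset.range n, a i * ε i ω) atTop (nhds x)} with hE
    have hsub : A ⊆ A' ∪ E := by
      rintro ω ⟨s, hxs, hts⟩
      rcases lt_or_eq_of_le hxs with h' | h'
      · exact Or.inl ⟨s, h', hts⟩
      · rw [← h'] at hts
        exact Or.inr hts
    set D : ℕ → Set Ω := fun N => ⋂ k, B (N + n₀ + k) with hD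
    have hA'sub : A' ⊆ ⋃ N, D N := by
      rintro ω ⟨s, hxs, hts⟩
      have hxcto : Tendsto (fun n => x * cn n) atTop (nhds x) := by
        have h7 := hcto.const_mul x
        simpa using h7
      have hev : ∀ᶠ n in atTop, x * cn n < S n ω := hxcto.eventually_lt hts hxs
      obtain ⟨N, hN⟩ := eventually_atTop.mp hev
      refine Set.mem_iUnion.mpr ⟨N, Set.mem_iInter.mpr fun k => ?_⟩
      exact le_of_lt (hN (N + n₀ + k) (by omega))
    have hmono : Monotone D := by
      intro N M hNM
      intro ω hω
      refine Set.mem_iInter.mpr fun k => ?_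
      have harr : N + n₀ + (M - N + k) = M + n₀ + k := by omega
      exact harr ▸ (Set.mem_iInter.mp hω (M - N + k))
    have hA'le : μ A' ≤ ENNReal.ofReal (Meq μ ε x) := by
      refine le_trans (measure_mono hA'sub) ?_
      rw [hmono.measure_iUnion]
      refine iSup_le fun N => ?_
      refine le_trans (measure_mono ?_) (key (N + n₀) (by omega))
      intro ω hω
      have h8 := Set.mem_iInter.mp hω 0
      simpa using h8
    have hAle : μ A ≤ ENNReal.ofReal (Meq μ ε x) := by
      calc μ A ≤ μ (A' ∪ E) := measure_mono hsub
        _ ≤ μ A' + μ E := measure_union_le _ _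
        _ = μ A' := by rw [hatom, add_zero]
        _ ≤ _ := hA'le
    have hfinal : tailProb μ ε a x ≤ Meq μ ε x := by
      rw [tailProb]
      exact ENNReal.toReal_le_of_le_ofReal (Meq_nonneg μ ε x) hAle
    linarith
end

section
/- For each natural n ≥ 8, let xₙ := √(n - 3 + 4/n) and tₙ := 1/xₙ. Then P(f_{n,tₙ}·ε ≥ xₙ) = (n+1)/2^{n+1}, where f_{n,t}·ε := √((1-t²)/n)·(ε₁ + ⋯ + εₙ) + t·ε_{n+1}. -/
open MeasureTheory ProbabilityTheory Filter

lemma rad_key (n : ℕ) (hn : 8 ≤ n) (u : ℕ → ℝ) (hu : ∀ i, u i = 1 ∨ u i = -1) :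
    ((n:ℝ)^2 - 3*n + 4 ≤ ((n:ℝ)-2) * (∑ i ∈ Finset.range n, u i) + n * u n) ↔
      ∃ j ∈ Finset.range (n+1), ∀ i ∈ Finset.range (n+1),
        u i = if i = j ∧ j < n then -1 else 1 := by
  classical
  have hn8 : (8:ℝ) ≤ n := by exact_mod_cast hn
  set S := ∑ i ∈ Finset.range n, u i with hS
  set T := (Finset.range n).filter (fun i => u i = -1) with hT
  have hsum : S = (n : ℝ) - 2 * T.card := by
    have h0 := Finset.sum_filter_add_sum_filter_not (Finset.range n)
      (fun i => u i = -1) u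
    have h1 : ∑ i ∈ T, u i = -(T.card : ℝ) := by
      rw [Finset.sum_congr rfl (fun i hi => (Finset.mem_filter.mp hi).2)]
      simp [T]
    have h2 : ∑ i ∈ (Finset.range n).filter (fun i => ¬ u i = -1), u i
        = (((Finset.range n).filter (fun i => ¬ u i = -1)).card : ℝ) := by
      rw [Finset.sum_congr rfl (fun i hi => ?_), Finset.sum_const, nsmul_eq_mul, mul_one]
      rcases hu i with h | h
      · exact h
      · exact absurd h (Finset.mem_filter.mp hi).2
    have h3 := Finset.card_filter_add_card_filter_not (s := Finset.range n)
      (p := fun i => u i = -1)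
    rw [Finset.card_range] at h3
    have h4 : (((Finset.range n).filter (fun i => ¬ u i = -1)).card : ℝ)
        = (n : ℝ) - T.card := by
      have : T.card + ((Finset.range n).filter (fun i => ¬ u i = -1)).card = n := h3
      rw [eq_sub_iff_add_eq]
      exact_mod_cast (by omega :
        ((Finset.range n).filter (fun i => ¬ u i = -1)).card + T.card = n)
    rw [hS, ← h0, ← hT, h1, h2, h4]
    ring
  constructor
  · intro h
    have hSn : S ≤ (n:ℝ) := by
      have : (0:ℝ) ≤ 2 * T.card := by positivity
      linarith [hsum]
    have hun : u n = 1 := by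
      rcases hu n with h1 | h1
      · exact h1
      · exfalso
        rw [h1] at h
        have h2 : ((n:ℝ)-2) * S ≤ ((n:ℝ)-2) * n :=
          mul_le_mul_of_nonneg_left hSn (by linarith)
        nlinarith
    rw [hun, mul_one] at h
    have hS2 : ((n:ℝ)) - 2 ≤ S := by
      have h2 : ((n:ℝ)-2) * ((n:ℝ)-2) ≤ ((n:ℝ)-2) * S := by nlinarith
      exact le_of_mul_le_mul_left h2 (by linarith)
    have hTcard : T.card ≤ 1 := by
      by_contra hc
      push_neg at hc
      have : (2:ℝ) ≤ (T.card : ℝ) := by exact_mod_cast hc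
      rw [hsum] at hS2; linarith
    rcases Nat.le_one_iff_eq_zero_or_eq_one.mp hTcard with h0 | h1
    · refine ⟨n, by simp, fun i hi => ?_⟩
      rw [if_neg (by rintro ⟨_, h2⟩; omega)]
      rcases Nat.lt_succ_iff_lt_or_eq.mp (Finset.mem_range.mp hi) with hi' | hi'
      · rcases hu i with h | h
        · exact h
        · exfalso
          have : i ∈ T := Finset.mem_filter.mpr ⟨Finset.mem_range.mpr hi', h⟩
          rw [Finset.card_eq_zero.mp h0] at this
          exact absurd this (Finset.notMem_empty i)
      · rw [hi']; exact hun
    · obtain ⟨j, hj⟩ := Finset.card_eq_one.mp h1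
      have hjT : j ∈ T := hj ▸ Finset.mem_singleton_self j
      have hjn : j < n := Finset.mem_range.mp (Finset.mem_filter.mp hjT).1
      have huj : u j = -1 := (Finset.mem_filter.mp hjT).2
      refine ⟨j, Finset.mem_range.mpr (by omega), fun i hi => ?_⟩
      by_cases hij : i = j
      · rw [if_pos ⟨hij, hjn⟩, hij]; exact huj
      · rw [if_neg (by rintro ⟨h2, _⟩; exact hij h2)]
        rcases Nat.lt_succ_iff_lt_or_eq.mp (Finset.mem_range.mp hi) with hi' | hi'
        · rcases hu i with h | h
          · exact h
          · exfalso
            have : i ∈ T := Finset.mem_filter.mpr ⟨Finset.mem_range.mpr hi', h⟩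
            rw [hj, Finset.mem_singleton] at this
            exact hij this
        · rw [hi']; exact hun
  · rintro ⟨j, hj, hval⟩
    have hun : u n = 1 := by
      have := hval n (by simp)
      rwa [if_neg (by rintro ⟨h1, h2⟩; omega)] at this
    by_cases hjn : j < n
    · have huj : u j = -1 := by
        have := hval j (Finset.mem_range.mpr (by omega))
        rwa [if_pos ⟨rfl, hjn⟩] at this
      have hrest : ∑ i ∈ (Finset.range n).erase j, u i
          = (((Finset.range n).erase j).card : ℝ) := by
        rw [Finset.sum_congr rfl (fun i hi => ?_), Finset.sum_const, nsmul_eq_mul, mul_one]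
        have hi' := Finset.mem_erase.mp hi
        have := hval i (Finset.mem_range.mpr (by
          have := Finset.mem_range.mp hi'.2; omega))
        rwa [if_neg (by rintro ⟨h2, _⟩; exact hi'.1 h2)] at this
      have hSval : S = (n:ℝ) - 2 := by
        rw [hS, ← Finset.add_sum_erase _ _ (Finset.mem_range.mpr hjn), huj, hrest,
          Finset.card_erase_of_mem (Finset.mem_range.mpr hjn), Finset.card_range]
        push_cast [Nat.cast_sub (by omega : 1 ≤ n)]
        ring
      rw [hSval, hun]; nlinarith
    · have hSval : S = (n:ℝ) := by
        rw [hS, Finset.sum_congr rfl (fun i hi => ?_), Finset.sum_const, nsmul_eq_mul,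
          mul_one, Finset.card_range]
        have := hval i (Finset.mem_range.mpr (by have := Finset.mem_range.mp hi; omega))
        rwa [if_neg (by rintro ⟨_, h2⟩; exact hjn h2)] at this
      rw [hSval, hun]; nlinarith

lemma rad_alg (n : ℕ) (hn : 8 ≤ n) (S e : ℝ) :
    (Real.sqrt ((n:ℝ) - 3 + 4 / n) ≤
      Real.sqrt ((1 - (1 / Real.sqrt ((n:ℝ) - 3 + 4 / n)) ^ 2) / n) * S
        + (1 / Real.sqrt ((n:ℝ) - 3 + 4 / n)) * e) ↔
    ((n:ℝ) ^ 2 - 3 * n + 4 ≤ ((n:ℝ) - 2) * S + n * e) := by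
  have hn8 : (8:ℝ) ≤ n := by exact_mod_cast hn
  have hnpos : (0:ℝ) < n := by linarith
  set x := Real.sqrt ((n:ℝ) - 3 + 4 / n) with hxdef
  have harg : (0:ℝ) < (n:ℝ) - 3 + 4 / n := by
    have : (0:ℝ) < 4 / n := by positivity
    linarith
  have hx2 : x ^ 2 = (n:ℝ) - 3 + 4 / n := Real.sq_sqrt harg.le
  have hxpos : (0:ℝ) < x := Real.sqrt_pos.mpr harg
  have hx2' : (n:ℝ) * x ^ 2 = (n:ℝ)^2 - 3*n + 4 := by
    rw [hx2]; field_simp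
  have hc : Real.sqrt ((1 - (1/x) ^ 2) / n) = ((n:ℝ) - 2) / (n * x) := by
    have h1 : (1 - (1/x) ^ 2) / (n:ℝ) = (((n:ℝ) - 2) / (n * x)) ^ 2 := by
      field_simp
      nlinarith [hx2']
    rw [h1, Real.sqrt_sq (div_nonneg (by linarith) (by positivity))]
  rw [hc]
  have hform : ((n:ℝ) - 2) / (n * x) * S + (1/x) * e = (((n:ℝ) - 2) * S + n * e) / (n * x) := by
    field_simp
  rw [hform, le_div_iff₀ (by positivity)]
  constructor <;> intro h <;> nlinarith [hx2']

open scoped ENNReal in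
theorem rademacher_zhubr_fTail_value {Ω : Type*} [MeasurableSpace Ω] (μ : MeasureTheory.Measure Ω)
    [MeasureTheory.IsProbabilityMeasure μ] (ε : ℕ → Ω → ℝ) (hε : IsRademacherSeq μ ε)
    (n : ℕ) (hn : 8 ≤ n) :
    fTail μ ε n (1 / Real.sqrt ((n : ℝ) - 3 + 4 / n)) (Real.sqrt ((n : ℝ) - 3 + 4 / n)) =
      ((n : ℝ) + 1) / 2 ^ (n + 1) := by
  obtain ⟨hmeas, hindep, hval⟩ := hε
  classical
  set w : ℕ → ℕ → ℝ := fun j i => if i = j ∧ j < n then -1 else 1 with hwdef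
  set A : ℕ → Set Ω := fun j => ⋂ i ∈ Finset.range (n+1), ε i ⁻¹' {w j i} with hAdef
  set G : Set Ω := {ω | ∀ i, ε i ω = 1 ∨ ε i ω = -1} with hGdef
  set E : Set Ω := {ω | Real.sqrt ((n : ℝ) - 3 + 4 / n) ≤
      Real.sqrt ((1 - (1 / Real.sqrt ((n : ℝ) - 3 + 4 / n)) ^ 2) / n) *
        (∑ i ∈ Finset.range n, ε i ω)
      + (1 / Real.sqrt ((n : ℝ) - 3 + 4 / n)) * ε n ω} with hEdef
  have hw : ∀ j i, w j i = 1 ∨ w j i = -1 := by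
    intro j i
    by_cases h : i = j ∧ j < n <;> simp [hwdef, h]
  have hhalf : ∀ (i : ℕ) (v : ℝ), v = 1 ∨ v = -1 → μ (ε i ⁻¹' {v}) = 1/2 := by
    intro i v hv
    rcases hv with h | h <;> subst h
    · exact (hval i).1
    · exact (hval i).2
  have hmemA : ∀ j ω, ω ∈ A j ↔ ∀ i ∈ Finset.range (n+1), ε i ω = w j i := by
    intro j ω
    simp [hAdef]
  have hA : ∀ j, μ (A j) = (1/2 : ℝ≥0∞) ^ (n+1) := by
    intro j
    have h1 := hindep.measure_inter_preimage_eq_mul (Finset.range (n+1))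
      (sets := fun i => ({w j i} : Set ℝ)) (fun i _ => measurableSet_singleton _)
    rw [hAdef]
    simp only []
    rw [h1, Finset.prod_congr rfl (fun i _ => hhalf i _ (hw j i)), Finset.prod_const,
      Finset.card_range]
  have hAmeas : ∀ j, MeasurableSet (A j) := fun j =>
    Finset.measurableSet_biInter _ (fun i _ => hmeas i (measurableSet_singleton _))
  have hdisj : (↑(Finset.range (n+1)) : Set ℕ).PairwiseDisjoint A := by
    intro j hj k hk hjk
    simp only [Finset.coe_range, Set.mem_Iio] at hj hk
    rw [Function.onFun, Set.disjoint_left]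
    intro ω hωj hωk
    rcases lt_or_ge j n with h | h
    · have h1 : ε j ω = w j j := (hmemA j ω).mp hωj j (Finset.mem_range.mpr (by omega))
      have h2 : ε j ω = w k j := (hmemA k ω).mp hωk j (Finset.mem_range.mpr (by omega))
      have h1' : ε j ω = -1 := by simpa [hwdef, h] using h1
      have h2' : ε j ω = 1 := by simpa [hwdef, hjk] using h2
      rw [h1'] at h2'; norm_num at h2'
    · have hkn : k < n := by omega
      have h1 : ε k ω = w k k := (hmemA k ω).mp hωk k (Finset.mem_range.mpr (by omega))
      have h2 : ε k ω = w j k := (hmemA j ω).mp hωj k (Finset.mem_range.mpr (by omega))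
      have h1' : ε k ω = -1 := by simpa [hwdef, hkn] using h1
      have h2' : ε k ω = 1 := by simpa [hwdef, hjk.symm] using h2
      rw [h1'] at h2'; norm_num at h2'
  have hGc : μ Gᶜ = 0 := by
    have hsub : Gᶜ ⊆ ⋃ i, ({ω | ε i ω = 1} ∪ {ω | ε i ω = -1})ᶜ := by
      intro ω hω
      simp only [hGdef, Set.mem_compl_iff, Set.mem_setOf_eq, not_forall] at hω
      obtain ⟨i, hi⟩ := hω
      push_neg at hi
      exact Set.mem_iUnion.mpr ⟨i, by simp [hi.1, hi.2]⟩
    refine measure_mono_null hsub (measure_iUnion_null fun i => ?_)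
    have hm1 : MeasurableSet {ω | ε i ω = 1} := hmeas i (measurableSet_singleton 1)
    have hm2 : MeasurableSet {ω | ε i ω = -1} := hmeas i (measurableSet_singleton (-1))
    have hd : Disjoint {ω | ε i ω = 1} {ω | ε i ω = -1} := by
      rw [Set.disjoint_left]
      intro ω h1 h2
      simp only [Set.mem_setOf_eq] at h1 h2
      rw [h1] at h2; norm_num at h2
    rw [measure_compl (hm1.union hm2) (measure_ne_top μ _),
      measure_union hd hm2, (hval i).1, (hval i).2, measure_univ]
    rw [one_div, ENNReal.inv_two_add_inv_two, tsub_self]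
  have hmuG : ∀ s : Set Ω, μ s = μ (s ∩ G) := by
    intro s
    refine le_antisymm ?_ (measure_mono Set.inter_subset_left)
    calc μ s ≤ μ (s ∩ G) + μ (s \ G) := measure_le_inter_add_diff μ s G
      _ ≤ μ (s ∩ G) + μ Gᶜ := by
          gcongr
          exact fun ω h => h.2
      _ = μ (s ∩ G) := by rw [hGc, add_zero]
  have hEG : E ∩ G = (⋃ j ∈ Finset.range (n+1), A j) ∩ G := by
    ext ω
    simp only [Set.mem_inter_iff, and_congr_left_iff]
    intro hG
    have hu : ∀ i, ε i ω = 1 ∨ ε i ω = -1 := hG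
    constructor
    · intro hE
      have h1 : ((n:ℝ)^2 - 3*n + 4 ≤ ((n:ℝ)-2) * (∑ i ∈ Finset.range n, ε i ω)
          + n * ε n ω) := (rad_alg n hn _ _).mp hE
      obtain ⟨j, hj, hji⟩ := (rad_key n hn (fun i => ε i ω) hu).mp h1
      exact Set.mem_biUnion hj ((hmemA j ω).mpr hji)
    · intro hD
      obtain ⟨j, hj, hωj⟩ := Set.mem_iUnion₂.mp hD
      exact (rad_alg n hn _ _).mpr ((rad_key n hn (fun i => ε i ω) hu).mpr
        ⟨j, hj, (hmemA j ω).mp hωj⟩)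
  have hμE : μ E = ((n + 1 : ℕ) : ℝ≥0∞) * (1/2 : ℝ≥0∞) ^ (n+1) := by
    rw [hmuG E, hEG, ← hmuG _]
    rw [measure_biUnion_finset hdisj (fun j _ => hAmeas j)]
    rw [Finset.sum_congr rfl (fun j _ => hA j), Finset.sum_const, Finset.card_range,
      nsmul_eq_mul]
  have hfinal : fTail μ ε n (1 / Real.sqrt ((n : ℝ) - 3 + 4 / n))
      (Real.sqrt ((n : ℝ) - 3 + 4 / n)) = (μ E).toReal := by
    rw [fTail]
  rw [hfinal, hμE, ENNReal.toReal_mul, ENNReal.toReal_pow, ENNReal.toReal_natCast]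
  simp only [one_div, ENNReal.toReal_inv, ENNReal.toReal_ofNat]
  push_cast
  rw [inv_pow]
  ring
end

section
/- For all natural n ≥ 16, (n+1)/2^{n+1} < Φ̄(xₙ), where xₙ := √(n - 3 + 4/n) and Φ̄ is the standard normal tail function. -/
set_option maxHeartbeats 1000000

open MeasureTheory ProbabilityTheory Filter

lemma gauss_integrable : Integrable (fun u : ℝ => Real.exp (-u ^ 2 / 2)) := by
  have h := integrable_exp_neg_mul_sq (b := (1/2 : ℝ)) (by norm_num)
  have e : (fun u : ℝ => Real.exp (-u ^ 2 / 2)) = fun u : ℝ => Real.exp (-(1/2) * u ^ 2) := by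
    funext u; congr 1; ring
  rw [e]; exact h

lemma mills_lower (x : ℝ) (hx : 1 ≤ x) :
    (Real.sqrt (2 * Real.pi))⁻¹ * (Real.exp (-x ^ 2 / 2) * (1 / x - 1 / x ^ 3)) ≤
      normalTail x := by
  have hx0 : 0 < x := by linarith
  have hxne : x ≠ 0 := ne_of_gt hx0
  have hgc : Continuous (fun u : ℝ => Real.exp (-x ^ 2 / 2 - x * (u - x)) * (1 - (u - x) ^ 2 / 2)) := by
    apply Continuous.mul
    · exact Real.continuous_exp.comp (by continuity)
    · continuity
  have hderiv : ∀ u ∈ Set.uIcc x (x + 2),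
      HasDerivAt (fun u : ℝ => Real.exp (-x ^ 2 / 2 - x * (u - x)) *
        ((u - x) ^ 2 / (2 * x) + (u - x) / x ^ 2 + 1 / x ^ 3 - 1 / x))
      (Real.exp (-x ^ 2 / 2 - x * (u - x)) * (1 - (u - x) ^ 2 / 2)) u := by
    intro u _
    have h0 : HasDerivAt (fun y : ℝ => y - x) 1 u := (hasDerivAt_id' u).sub_const x
    have h1 : HasDerivAt (fun y : ℝ => -x ^ 2 / 2 - x * (y - x)) (-x) u := by
      have := (h0.const_mul x).const_sub (-x ^ 2 / 2)
      convert this using 2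
      · rfl
      · rfl
      · rfl
      ring
    have hexp := h1.exp
    have h2 : HasDerivAt (fun y : ℝ =>
        (y - x) ^ 2 / (2 * x) + (y - x) / x ^ 2 + 1 / x ^ 3 - 1 / x)
        ((u - x) / x + 1 / x ^ 2) u := by
      have ha := (h0.pow 2).div_const (2 * x)
      have hb := h0.div_const (x ^ 2)
      have hc := (ha.add hb).add_const (1 / x ^ 3 - 1 / x)
      convert hc using 1
      · rfl
      · rfl
      · funext y; simp only [Pi.add_apply, Pi.pow_apply]; ring
      · field_simp; ring
    have := hexp.mul h2
    convert this using 1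
    · rfl
    · rfl
    · rfl
    field_simp
    ring
  have hcalc : ∫ u in x..(x + 2),
      Real.exp (-x ^ 2 / 2 - x * (u - x)) * (1 - (u - x) ^ 2 / 2) =
      (Real.exp (-x ^ 2 / 2 - x * ((x + 2) - x)) *
        (((x + 2) - x) ^ 2 / (2 * x) + ((x + 2) - x) / x ^ 2 + 1 / x ^ 3 - 1 / x)) -
      (Real.exp (-x ^ 2 / 2 - x * (x - x)) *
        ((x - x) ^ 2 / (2 * x) + (x - x) / x ^ 2 + 1 / x ^ 3 - 1 / x)) :=
    intervalIntegral.integral_eq_sub_of_hasDerivAt hderiv (hgc.intervalIntegrable _ _)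
  have hFbound : Real.exp (-x ^ 2 / 2) * (1 / x - 1 / x ^ 3) ≤
      ∫ u in x..(x + 2), Real.exp (-x ^ 2 / 2 - x * (u - x)) * (1 - (u - x) ^ 2 / 2) := by
    rw [hcalc]
    have he1 : -x ^ 2 / 2 - x * ((x + 2) - x) = -x ^ 2 / 2 - 2 * x := by ring
    have he2 : -x ^ 2 / 2 - x * (x - x) = -x ^ 2 / 2 := by ring
    rw [he1, he2]
    have hpos : 0 ≤ ((x + 2) - x) ^ 2 / (2 * x) + ((x + 2) - x) / x ^ 2 + 1 / x ^ 3 - 1 / x := by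
      have : ((x + 2) - x) ^ 2 / (2 * x) + ((x + 2) - x) / x ^ 2 + 1 / x ^ 3 - 1 / x =
          1 / x + 2 / x ^ 2 + 1 / x ^ 3 := by field_simp; ring
      rw [this]; positivity
    have hz : (x - x) ^ 2 / (2 * x) + (x - x) / x ^ 2 + 1 / x ^ 3 - 1 / x = 1 / x ^ 3 - 1 / x := by
      ring
    rw [hz]
    nlinarith [mul_nonneg (Real.exp_pos (-x ^ 2 / 2 - 2 * x)).le hpos,
      Real.exp_pos (-x ^ 2 / 2)]
  have hmono : (∫ u in x..(x + 2),
        Real.exp (-x ^ 2 / 2 - x * (u - x)) * (1 - (u - x) ^ 2 / 2)) ≤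
      ∫ u in x..(x + 2), Real.exp (-u ^ 2 / 2) := by
    apply intervalIntegral.integral_mono_on (by linarith)
      (hgc.intervalIntegrable _ _) gauss_integrable.intervalIntegrable
    intro u _
    have heq : Real.exp (-u ^ 2 / 2) =
        Real.exp (-x ^ 2 / 2 - x * (u - x)) * Real.exp (-(u - x) ^ 2 / 2) := by
      rw [← Real.exp_add]; congr 1; ring
    rw [heq]
    apply mul_le_mul_of_nonneg_left _ (Real.exp_pos _).le
    have := Real.add_one_le_exp (-(u - x) ^ 2 / 2)
    linarith
  have hIoc : (∫ u in x..(x + 2), Real.exp (-u ^ 2 / 2)) =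
      ∫ u in Set.Ioc x (x + 2), Real.exp (-u ^ 2 / 2) :=
    intervalIntegral.integral_of_le (by linarith)
  have hsub : (∫ u in Set.Ioc x (x + 2), Real.exp (-u ^ 2 / 2)) ≤
      ∫ u in Set.Ici x, Real.exp (-u ^ 2 / 2) := by
    apply setIntegral_mono_set gauss_integrable.integrableOn
    · filter_upwards with u using Real.exp_nonneg _
    · exact ((Set.Ioc_subset_Icc_self.trans Set.Icc_subset_Ici_self)).eventuallyLE
  have hnt : normalTail x =
      (Real.sqrt (2 * Real.pi))⁻¹ * ∫ u in Set.Ici x, Real.exp (-u ^ 2 / 2) := by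
    rw [normalTail, MeasureTheory.integral_const_mul]
  rw [hnt]
  have hc : (0 : ℝ) ≤ (Real.sqrt (2 * Real.pi))⁻¹ := by positivity
  apply mul_le_mul_of_nonneg_left _ hc
  calc Real.exp (-x ^ 2 / 2) * (1 / x - 1 / x ^ 3)
      ≤ _ := hFbound
    _ ≤ ∫ u in x..(x + 2), Real.exp (-u ^ 2 / 2) := hmono
    _ = ∫ u in Set.Ioc x (x + 2), Real.exp (-u ^ 2 / 2) := hIoc
    _ ≤ ∫ u in Set.Ici x, Real.exp (-u ^ 2 / 2) := hsub


lemma exp_53_8_lt : Real.exp (53 / 8) < 755 := by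
  have h1 : Real.exp (53 / 8) ^ 8 = Real.exp 53 := by
    rw [← Real.exp_nat_mul]; norm_num
  have h2 : Real.exp 53 = Real.exp 1 ^ 53 := by
    rw [← Real.exp_nat_mul]; norm_num
  have h3 : Real.exp 1 ^ 53 < 2.7182818286 ^ 53 :=
    pow_lt_pow_left₀ Real.exp_one_lt_d9 (Real.exp_pos 1).le (by norm_num)
  have h4 : (2.7182818286 : ℝ) ^ 53 < 755 ^ 8 := by norm_num
  have h5 : Real.exp (53 / 8) ^ 8 < 755 ^ 8 := by rw [h1, h2]; linarith
  exact lt_of_pow_lt_pow_left₀ 8 (by norm_num) h5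

lemma sqrt_two_pi_lt : Real.sqrt (2 * Real.pi) < 2.50663 :=
  (Real.sqrt_lt' (by norm_num)).mpr (by nlinarith [Real.pi_lt_d6])

lemma poly_step (x : ℝ) (hx : 16 ≤ x) :
    (x + 2) ^ 2 * ((4 * x - 15) / 4) ^ 2 * ((4 * x - 7) / 4) ^ 3 * 2.72 ≤
      4 * (x + 1) ^ 2 * (x - 3) ^ 5 := by
  have hm : 0 ≤ x - 16 := by linarith
  nlinarith [pow_nonneg hm 7, pow_nonneg hm 6, pow_nonneg hm 5, pow_nonneg hm 4,
    pow_nonneg hm 3, pow_nonneg hm 2, hm, sq_nonneg (x - 16),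
    mul_nonneg (pow_nonneg hm 2) hm]

lemma key (n : ℕ) (hn : 16 ≤ n) :
    ((n : ℝ) + 1) * Real.sqrt (2 * Real.pi) *
        (((n : ℝ) - 3 + 4 / n) * Real.sqrt ((n : ℝ) - 3 + 4 / n)) *
        Real.exp (((n : ℝ) - 3) / 2 + 1 / 8) <
      2 ^ (n + 1) * ((n : ℝ) - 4 + 4 / n) := by
  induction n, hn using Nat.le_induction with
  | base =>
    push_cast
    have h1 : Real.sqrt (2 * Real.pi) < 2.50663 := sqrt_two_pi_lt
    have h2 : Real.sqrt (53 / 4) < 3.64006 :=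
      (Real.sqrt_lt' (by norm_num)).mpr (by norm_num)
    have h3 : Real.exp (13 / 2 + 1 / 8) < 755 := by
      have : (13 / 2 + 1 / 8 : ℝ) = 53 / 8 := by norm_num
      rw [this]; exact exp_53_8_lt
    have hs1 : (0:ℝ) ≤ Real.sqrt (2 * Real.pi) := Real.sqrt_nonneg _
    have hs2 : (0:ℝ) ≤ Real.sqrt (53 / 4) := Real.sqrt_nonneg _
    have he : (0:ℝ) < Real.exp (13 / 2 + 1 / 8) := Real.exp_pos _
    calc (16 + 1 : ℝ) * Real.sqrt (2 * Real.pi) * ((16 - 3 + 4 / 16) * Real.sqrt (16 - 3 + 4 / 16)) *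
          Real.exp ((16 - 3) / 2 + 1 / 8)
        = 17 * Real.sqrt (2 * Real.pi) * ((53 / 4) * Real.sqrt (53 / 4)) *
          Real.exp (13 / 2 + 1 / 8) := by norm_num
      _ ≤ 17 * 2.50663 * ((53 / 4) * 3.64006) * 755 := by
          gcongr <;> first | positivity | linarith
      _ < 2 ^ (16 + 1) * (16 - 4 + 4 / 16 : ℝ) := by norm_num
  | succ n hn ih =>
    have hN : (16 : ℝ) ≤ (n : ℝ) := by exact_mod_cast hn
    set N : ℝ := (n : ℝ) with hNdef
    have hNpos : (0 : ℝ) < N := by linarith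
    -- abbreviations
    set s : ℝ := N - 3 + 4 / N with hsdef
    set s' : ℝ := N + 1 - 3 + 4 / (N + 1) with hs'def
    have h4N : 0 < 4 / N := by positivity
    have h4N' : 0 < 4 / (N + 1) := by positivity
    have h4Nle : 4 / N ≤ 1 / 4 := by
      rw [div_le_div_iff₀ hNpos (by norm_num)]; linarith
    have h4N'le : 4 / (N + 1) ≤ 1 / 4 := by
      rw [div_le_div_iff₀ (by linarith) (by norm_num)]; linarith
    have hs13 : 13 ≤ s := by simp only [hsdef]; linarith
    have hs'14 : 14 ≤ s' := by simp only [hs'def]; linarith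
    have hs_lb : N - 3 ≤ s := by simp only [hsdef]; linarith
    have hs1_ub : s - 1 ≤ (4 * N - 15) / 4 := by simp only [hsdef]; linarith
    have hs'_ub : s' ≤ (4 * N - 7) / 4 := by simp only [hs'def]; linarith
    have hs'1_lb : N - 3 ≤ s' - 1 := by simp only [hs'def]; linarith
    have hs0 : (0:ℝ) ≤ s := by linarith
    have hs'0 : (0:ℝ) ≤ s' := by linarith
    have hsq : Real.sqrt s ^ 2 = s := Real.sq_sqrt hs0
    have hsq' : Real.sqrt s' ^ 2 = s' := Real.sq_sqrt hs'0
    have hsqnn : 0 ≤ Real.sqrt s := Real.sqrt_nonneg _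
    have hsqnn' : 0 ≤ Real.sqrt s' := Real.sqrt_nonneg _
    have hexpsq : Real.exp (1/2 : ℝ) ^ 2 = Real.exp 1 := by
      rw [← Real.exp_nat_mul]; norm_num
    have hexp1 : Real.exp 1 < 2.72 := by
      have := Real.exp_one_lt_d9; linarith
    -- the key squared inequality
    have hB0 : (0:ℝ) ≤ 2 * ((N + 1) * (s' - 1)) * (s * Real.sqrt s) := by
      apply mul_nonneg
      · apply mul_nonneg (by norm_num)
        apply mul_nonneg (by linarith) (by linarith)
      · exact mul_nonneg hs0 hsqnn
    have hp2 : (0:ℝ) ≤ (4 * N - 7) / 4 := by linarith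
    have hg1 : (0:ℝ) ≤ (N + 2) ^ 2 * ((4 * N - 15) / 4) ^ 2 * (((4 * N - 7) / 4) ^ 2 * ((4 * N - 7) / 4)) :=
      mul_nonneg (mul_nonneg (sq_nonneg _) (sq_nonneg _)) (mul_nonneg (sq_nonneg _) hp2)
    have hg2 : (0:ℝ) ≤ (N - 3) ^ 2 * ((N - 3) ^ 2 * (N - 3)) :=
      mul_nonneg (sq_nonneg _) (mul_nonneg (sq_nonneg _) (by linarith))
    have hg3 : (0:ℝ) ≤ (N - 3) ^ 2 * (N - 3) := mul_nonneg (sq_nonneg _) (by linarith)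
    have hK : (N + 2) * (s - 1) * (s' * Real.sqrt s') * Real.exp (1/2 : ℝ) ≤
        2 * ((N + 1) * (s' - 1)) * (s * Real.sqrt s) := by
      apply le_of_pow_le_pow_left₀ (n := 2) (by norm_num) hB0
      have hA2 : ((N + 2) * (s - 1) * (s' * Real.sqrt s') * Real.exp (1/2 : ℝ)) ^ 2 =
          (N + 2) ^ 2 * (s - 1) ^ 2 * (s' ^ 2 * Real.sqrt s' ^ 2) * Real.exp (1/2:ℝ) ^ 2 := by
        ring
      have hB2 : (2 * ((N + 1) * (s' - 1)) * (s * Real.sqrt s)) ^ 2 =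
          4 * (N + 1) ^ 2 * (s' - 1) ^ 2 * (s ^ 2 * Real.sqrt s ^ 2) := by ring
      rw [hA2, hB2, hsq, hsq', hexpsq]
      calc (N + 2) ^ 2 * (s - 1) ^ 2 * (s' ^ 2 * s') * Real.exp 1
          ≤ (N + 2) ^ 2 * ((4 * N - 15) / 4) ^ 2 * (((4 * N - 7) / 4) ^ 2 * ((4 * N - 7) / 4)) * 2.72 := by
            gcongr <;> first | assumption | positivity | linarith
        _ = (N + 2) ^ 2 * ((4 * N - 15) / 4) ^ 2 * ((4 * N - 7) / 4) ^ 3 * 2.72 := by ring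
        _ ≤ 4 * (N + 1) ^ 2 * (N - 3) ^ 5 := poly_step N hN
        _ = 4 * (N + 1) ^ 2 * ((N - 3) ^ 2 * ((N - 3) ^ 2 * (N - 3))) := by ring
        _ ≤ 4 * (N + 1) ^ 2 * ((s' - 1) ^ 2 * (s ^ 2 * s)) := by
            gcongr <;> first | assumption | positivity | linarith
        _ = 4 * (N + 1) ^ 2 * (s' - 1) ^ 2 * (s ^ 2 * s) := by ring
    -- assemble
    have hexpsplit : Real.exp ((N + 1 - 3) / 2 + 1 / 8) =
        Real.exp ((N - 3) / 2 + 1 / 8) * Real.exp (1/2 : ℝ) := by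
      rw [← Real.exp_add]; congr 1; ring
    have hC : (0:ℝ) ≤ Real.sqrt (2 * Real.pi) * Real.exp ((N - 3) / 2 + 1 / 8) := by positivity
    have h1 := mul_le_mul_of_nonneg_right hK hC
    have h2 := mul_lt_mul_of_pos_left ih (show (0:ℝ) < 2 * (s' - 1) by linarith)
    have hs1pos : (0:ℝ) < s - 1 := by linarith
    push_cast
    rw [pow_succ (2:ℝ) (n+1)]
    have hgoal : ((N + 2) * Real.sqrt (2 * Real.pi) * (s' * Real.sqrt s') *
        Real.exp ((N + 1 - 3) / 2 + 1 / 8)) * (s - 1) <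
        (2 ^ (n + 1) * 2 * (s' - 1)) * (s - 1) := by
      rw [hexpsplit]
      nlinarith [h1, h2]
    have := (mul_lt_mul_iff_left₀ hs1pos).mp hgoal
    calc (N + 1 + 1) * Real.sqrt (2 * Real.pi) * ((N + 1 - 3 + 4 / (N + 1)) * Real.sqrt (N + 1 - 3 + 4 / (N + 1))) *
          Real.exp ((N + 1 - 3) / 2 + 1 / 8)
        = (N + 2) * Real.sqrt (2 * Real.pi) * (s' * Real.sqrt s') *
          Real.exp ((N + 1 - 3) / 2 + 1 / 8) := by rw [hs'def]; ring_nf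
      _ < 2 ^ (n + 1) * 2 * (s' - 1) := this
      _ = 2 ^ (n + 1) * 2 * (N + 1 - 4 + 4 / (N + 1)) := by rw [hs'def]; ring_nf


theorem zhubr_lt_normalTail (n : ℕ) (hn : 16 ≤ n) :
    ((n : ℝ) + 1) / 2 ^ (n + 1) < normalTail (Real.sqrt ((n : ℝ) - 3 + 4 / n)) := by
  have hkey := key n hn
  have hN : (16 : ℝ) ≤ (n : ℝ) := by exact_mod_cast hn
  set N : ℝ := (n : ℝ) with hNdef
  have hNpos : (0 : ℝ) < N := by linarith
  set s : ℝ := N - 3 + 4 / N with hsdef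
  set x : ℝ := Real.sqrt s with hxdef
  have h4N : 0 < 4 / N := by positivity
  have h4Nle : 4 / N ≤ 1 / 4 := by
    rw [div_le_div_iff₀ hNpos (by norm_num)]; linarith
  have hs13 : 13 ≤ s := by rw [hsdef]; linarith
  have hx1 : 1 ≤ x := by
    rw [hxdef, ← Real.sqrt_one]
    exact Real.sqrt_le_sqrt (by linarith)
  have hx0 : 0 < x := lt_of_lt_of_le one_pos hx1
  have hxne : x ≠ 0 := ne_of_gt hx0
  have hx2 : x ^ 2 = s := Real.sq_sqrt (by linarith)
  have hm := mills_lower x hx1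
  refine lt_of_lt_of_le ?_ hm
  have hx3 : x ^ 3 = s * x := by rw [← hx2]; ring
  have hxs : 1 / x - 1 / x ^ 3 = (s - 1) / (s * x) := by
    rw [hx3, ← hx2]
    field_simp
  rw [hx2, hxs]
  set P : ℝ := Real.sqrt (2 * Real.pi) with hPdef
  have hP : 0 < P := by rw [hPdef]; positivity
  have hsx : 0 < s * x := mul_pos (by linarith) hx0
  have hE0 : 0 < Real.exp ((N - 3) / 2 + 1 / 8) := Real.exp_pos _
  have h5 : (N + 1) * (P * (s * x) * Real.exp ((N - 3) / 2 + 1 / 8)) < 2 ^ (n + 1) * (s - 1) := by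
    have h5' : 2 ^ (n + 1) * (N - 4 + 4 / N) = 2 ^ (n + 1) * (s - 1) := by
      rw [hsdef]; ring
    rw [← h5']
    nlinarith [hkey]
  have hestep : Real.exp (-((N - 3) / 2 + 1 / 8)) ≤ Real.exp (-(s / 2)) := by
    apply Real.exp_le_exp.mpr
    rw [hsdef]; linarith
  rw [div_lt_iff₀ (by positivity : (0:ℝ) < 2 ^ (n + 1))]
  have hdenom : 0 < P * (s * x) * Real.exp ((N - 3) / 2 + 1 / 8) :=
    mul_pos (mul_pos hP hsx) hE0
  have h6 : N + 1 < 2 ^ (n + 1) * (s - 1) / (P * (s * x) * Real.exp ((N - 3) / 2 + 1 / 8)) :=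
    (lt_div_iff₀ hdenom).mpr h5
  refine lt_of_lt_of_le h6 ?_
  have hnum : (0:ℝ) ≤ 2 ^ (n + 1) * (s - 1) := by
    apply mul_nonneg (by positivity); linarith
  clear_value N s x P
  calc 2 ^ (n + 1) * (s - 1) / (P * (s * x) * Real.exp ((N - 3) / 2 + 1 / 8))
      = 2 ^ (n + 1) * (s - 1) * Real.exp (-((N - 3) / 2 + 1 / 8)) / (P * (s * x)) := by
        rw [Real.exp_neg]; ring
    _ ≤ 2 ^ (n + 1) * (s - 1) * Real.exp (-(s / 2)) / (P * (s * x)) := by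
        exact (div_le_div_iff_of_pos_right (mul_pos hP hsx)).mpr
          (mul_le_mul_of_nonneg_left hestep hnum)
    _ = P⁻¹ * (Real.exp (-s / 2) * ((s - 1) / (s * x))) * 2 ^ (n + 1) := by
        rw [neg_div]; ring
end

section
/- For all natural n ≥ 16, with xₙ := √(n - 3 + 4/n), tₙ := 1/xₙ, one has P(f_{n,tₙ}·ε ≥ xₙ) < M⁼(xₙ), where M⁼(x) := sup_{j∈ℕ} P((ε₁+⋯+ε_j)/√j ≥ x) and f_{n,t}·ε := √((1-t²)/n)(ε₁+⋯+εₙ) + t·ε_{n+1}. -/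
set_option maxHeartbeats 1000000
set_option linter.unusedSectionVars false

open MeasureTheory ProbabilityTheory Filter
open scoped ENNReal

/-! ### Auxiliary combinatorial lemmas -/

lemma sum_choose_succ_row (j t : ℕ) :
    ∑ k ∈ Finset.range (t + 2), Nat.choose (j+1) k
      = ∑ k ∈ Finset.range (t + 2), Nat.choose j k
        + ∑ k ∈ Finset.range (t + 1), Nat.choose j k := by
  rw [Finset.sum_range_succ' (fun k => Nat.choose (j+1) k),
      Finset.sum_range_succ' (fun k => Nat.choose j k)]
  simp only [Nat.choose_succ_succ, Nat.succ_eq_add_one]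
  rw [Finset.sum_add_distrib]
  simp [Nat.choose_zero_right]
  omega

lemma sum_choose_add_four (j t : ℕ) :
    ∑ k ∈ Finset.range (t+5), Nat.choose (j+4) k
      = ∑ k ∈ Finset.range (t+5), Nat.choose j k
        + 4 * ∑ k ∈ Finset.range (t+4), Nat.choose j k
        + 6 * ∑ k ∈ Finset.range (t+3), Nat.choose j k
        + 4 * ∑ k ∈ Finset.range (t+2), Nat.choose j k
        + ∑ k ∈ Finset.range (t+1), Nat.choose j k := by
  have h1 := sum_choose_succ_row (j+3) (t+3)
  have h2 := sum_choose_succ_row (j+2) (t+3)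
  have h3 := sum_choose_succ_row (j+2) (t+2)
  have h4 := sum_choose_succ_row (j+1) (t+3)
  have h5 := sum_choose_succ_row (j+1) (t+2)
  have h6 := sum_choose_succ_row (j+1) (t+1)
  have h7 := sum_choose_succ_row j (t+3)
  have h8 := sum_choose_succ_row j (t+2)
  have h9 := sum_choose_succ_row j (t+1)
  have h10 := sum_choose_succ_row j t
  ring_nf at h1 h2 h3 h4 h5 h6 h7 h8 h9 h10 ⊢
  omega
lemma step_ineq (n : ℕ) (hn : 16 ≤ n) :
    8*(n+2) * (∑ k ∈ Finset.range (n+7), Nat.choose (4*n+12) k)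
      ≤ (n+1) * (∑ k ∈ Finset.range (n+8), Nat.choose (4*n+16) k) := by
  rw [show 4*n+16 = (4*n+12)+4 by ring, show n+8 = (n+3)+5 by ring,
      sum_choose_add_four (4*n+12) (n+3)]
  -- abbreviations
  set j := 4*n+12 with hj
  -- expand partial sums down to range (n+4)
  have s8 : ∑ k ∈ Finset.range (n+3+5), Nat.choose j k
      = ∑ k ∈ Finset.range (n+4), Nat.choose j k
        + Nat.choose j (n+4) + Nat.choose j (n+5) + Nat.choose j (n+6) + Nat.choose j (n+7) := by
    rw [show n+3+5 = (n+7)+1 by ring, Finset.sum_range_succ,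
        show n+7 = (n+6)+1 by ring, Finset.sum_range_succ,
        show n+6 = (n+5)+1 by ring, Finset.sum_range_succ,
        show n+5 = (n+4)+1 by ring, Finset.sum_range_succ]
  have s7 : ∑ k ∈ Finset.range (n+3+4), Nat.choose j k
      = ∑ k ∈ Finset.range (n+4), Nat.choose j k
        + Nat.choose j (n+4) + Nat.choose j (n+5) + Nat.choose j (n+6) := by
    rw [show n+3+4 = (n+6)+1 by ring, Finset.sum_range_succ,
        show n+6 = (n+5)+1 by ring, Finset.sum_range_succ,
        show n+5 = (n+4)+1 by ring, Finset.sum_range_succ]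
  have s6 : ∑ k ∈ Finset.range (n+3+3), Nat.choose j k
      = ∑ k ∈ Finset.range (n+4), Nat.choose j k
        + Nat.choose j (n+4) + Nat.choose j (n+5) := by
    rw [show n+3+3 = (n+5)+1 by ring, Finset.sum_range_succ,
        show n+5 = (n+4)+1 by ring, Finset.sum_range_succ]
  have s5 : ∑ k ∈ Finset.range (n+3+2), Nat.choose j k
      = ∑ k ∈ Finset.range (n+4), Nat.choose j k + Nat.choose j (n+4) := by
    rw [show n+3+2 = (n+4)+1 by ring, Finset.sum_range_succ]
  have s4 : ∑ k ∈ Finset.range (n+3+1), Nat.choose j k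
      = ∑ k ∈ Finset.range (n+4), Nat.choose j k := by norm_num
  rw [s8, s7, s6, s5, s4]
  -- names
  set e := ∑ k ∈ Finset.range (n+4), Nat.choose j k with he'
  set m3 := Nat.choose j (n+3) with hm3
  set m2 := Nat.choose j (n+4) with hm2
  set m1 := Nat.choose j (n+5) with hm1
  set b0 := Nat.choose j (n+6) with hb0
  set b1 := Nat.choose j (n+7) with hb1
  have hem3 : m3 ≤ e := by
    rw [he']
    exact Finset.single_le_sum (f := fun k => Nat.choose j k)
      (fun i _ => Nat.zero_le _) (Finset.self_mem_range_succ (n+3))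
  -- ratio identities
  have r1 : b1 * (n+7) = b0 * (3*n+6) := by
    have := Nat.choose_succ_right_eq j (n+6)
    rwa [show n+6+1 = n+7 by ring, show j - (n+6) = 3*n+6 by omega] at this
  have r2 : b0 * (n+6) = m1 * (3*n+7) := by
    have := Nat.choose_succ_right_eq j (n+5)
    rwa [show n+5+1 = n+6 by ring, show j - (n+5) = 3*n+7 by omega] at this
  have r3 : m1 * (n+5) = m2 * (3*n+8) := by
    have := Nat.choose_succ_right_eq j (n+4)
    rwa [show n+4+1 = n+5 by ring, show j - (n+4) = 3*n+8 by omega] at this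
  have r4 : m2 * (n+4) = m3 * (3*n+9) := by
    have := Nat.choose_succ_right_eq j (n+3)
    rwa [show n+3+1 = n+4 by ring, show j - (n+3) = 3*n+9 by omega] at this
  -- move to ℤ
  zify at r1 r2 r3 r4 hem3 ⊢
  have hn' : (16:ℤ) ≤ (n:ℤ) := by exact_mod_cast hn
  set N : ℤ := (n : ℤ) with hN
  set E := (e : ℤ); set M3 := (m3 : ℤ); set M2 := (m2 : ℤ); set M1 := (m1 : ℤ)
  set B0 := (b0 : ℤ); set B1 := (b1 : ℤ)
  have hM3 : 0 ≤ M3 := Int.ofNat_nonneg m3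
  have hD : (0:ℤ) < (N+4)*(N+5)*(N+6)*(N+7) :=
    mul_pos (mul_pos (mul_pos (by linarith) (by linarith)) (by linarith)) (by linarith)
  apply le_of_mul_le_mul_right ?_ hD
  have Hm2 : M2 * ((N+4)*(N+5)*(N+6)*(N+7)) = M3 * ((3*N+9)*(N+5)*(N+6)*(N+7)) := by
    linear_combination ((N+5)*(N+6)*(N+7)) * r4
  have Hm1 : M1 * ((N+4)*(N+5)*(N+6)*(N+7)) = M3 * ((3*N+8)*(3*N+9)*(N+6)*(N+7)) := by
    linear_combination ((N+4)*(N+6)*(N+7)) * r3 + ((3*N+8)*(N+6)*(N+7)) * r4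
  have Hb0 : B0 * ((N+4)*(N+5)*(N+6)*(N+7)) = M3 * ((3*N+7)*(3*N+8)*(3*N+9)*(N+7)) := by
    linear_combination ((N+4)*(N+5)*(N+7)) * r2 + ((3*N+7)*(N+4)*(N+7)) * r3
      + ((3*N+7)*(3*N+8)*(N+7)) * r4
  have Hb1 : B1 * ((N+4)*(N+5)*(N+6)*(N+7)) = M3 * ((3*N+6)*(3*N+7)*(3*N+8)*(3*N+9)) := by
    linear_combination ((N+4)*(N+5)*(N+6)) * r1 + ((3*N+6)*(N+4)*(N+5)) * r2
      + ((3*N+6)*(3*N+7)*(N+4)) * r3 + ((3*N+6)*(3*N+7)*(3*N+8)) * r4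
  -- explicit polynomial identity in q = N - 16
  have polyid : (N+1)*(15*((3*N+9)*(N+5)*(N+6)*(N+7)) + 11*((3*N+8)*(3*N+9)*(N+6)*(N+7))
        + 5*((3*N+7)*(3*N+8)*(3*N+9)*(N+7)) + (3*N+6)*(3*N+7)*(3*N+8)*(3*N+9))
        + 8*N*((N+4)*(N+5)*(N+6)*(N+7))
      - 8*(N+2)*((3*N+9)*(N+5)*(N+6)*(N+7) + (3*N+8)*(3*N+9)*(N+6)*(N+7)
        + (3*N+7)*(3*N+8)*(3*N+9)*(N+7))
      = 56*(N-16)^5 + 4932*(N-16)^4 + 172652*(N-16)^3 + 2996430*(N-16)^2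
        + 25704596*(N-16) + 86813958 := by ring
  have hq : (0:ℤ) ≤ N - 16 := by linarith
  have poly : 8*(N+2)*((3*N+9)*(N+5)*(N+6)*(N+7) + (3*N+8)*(3*N+9)*(N+6)*(N+7)
        + (3*N+7)*(3*N+8)*(3*N+9)*(N+7))
      ≤ (N+1)*(15*((3*N+9)*(N+5)*(N+6)*(N+7)) + 11*((3*N+8)*(3*N+9)*(N+6)*(N+7))
        + 5*((3*N+7)*(3*N+8)*(3*N+9)*(N+7)) + (3*N+6)*(3*N+7)*(3*N+8)*(3*N+9))
        + 8*N*((N+4)*(N+5)*(N+6)*(N+7)) := by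
    linarith [polyid, pow_nonneg hq 5, pow_nonneg hq 4, pow_nonneg hq 3, pow_nonneg hq 2, hq]
  have key1 : M3 * (8*(N+2)*((3*N+9)*(N+5)*(N+6)*(N+7) + (3*N+8)*(3*N+9)*(N+6)*(N+7)
        + (3*N+7)*(3*N+8)*(3*N+9)*(N+7)))
      ≤ M3 * ((N+1)*(15*((3*N+9)*(N+5)*(N+6)*(N+7)) + 11*((3*N+8)*(3*N+9)*(N+6)*(N+7))
        + 5*((3*N+7)*(3*N+8)*(3*N+9)*(N+7)) + (3*N+6)*(3*N+7)*(3*N+8)*(3*N+9))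
        + 8*N*((N+4)*(N+5)*(N+6)*(N+7))) :=
    mul_le_mul_of_nonneg_left poly hM3
  have hED : M3 * ((N+4)*(N+5)*(N+6)*(N+7)) ≤ E * ((N+4)*(N+5)*(N+6)*(N+7)) :=
    mul_le_mul_of_nonneg_right hem3 (le_of_lt hD)
  have hED8 : 8*N*(M3 * ((N+4)*(N+5)*(N+6)*(N+7))) ≤ 8*N*(E * ((N+4)*(N+5)*(N+6)*(N+7))) :=
    mul_le_mul_of_nonneg_left hED (by linarith)
  have EL : 8*(N+2)*(E+M2+M1+B0) * ((N+4)*(N+5)*(N+6)*(N+7))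
      = 8*(N+2)*(E*((N+4)*(N+5)*(N+6)*(N+7)))
        + M3 * (8*(N+2)*((3*N+9)*(N+5)*(N+6)*(N+7) + (3*N+8)*(3*N+9)*(N+6)*(N+7)
          + (3*N+7)*(3*N+8)*(3*N+9)*(N+7))) := by
    linear_combination (8*(N+2))*Hm2 + (8*(N+2))*Hm1 + (8*(N+2))*Hb0
  have ER : (N+1)*(E+M2+M1+B0+B1 + 4*(E+M2+M1+B0) + 6*(E+M2+M1) + 4*(E+M2) + E)
        * ((N+4)*(N+5)*(N+6)*(N+7))
      = 16*(N+1)*(E*((N+4)*(N+5)*(N+6)*(N+7)))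
        + M3 * ((N+1)*(15*((3*N+9)*(N+5)*(N+6)*(N+7)) + 11*((3*N+8)*(3*N+9)*(N+6)*(N+7))
          + 5*((3*N+7)*(3*N+8)*(3*N+9)*(N+7)) + (3*N+6)*(3*N+7)*(3*N+8)*(3*N+9))) := by
    linear_combination (15*(N+1))*Hm2 + (11*(N+1))*Hm1 + (5*(N+1))*Hb0 + (N+1)*Hb1
  linarith [EL, ER, key1, hED8]

lemma key_count : ∀ n : ℕ, 16 ≤ n →
    (n+1) * 2^(3*n+11) < ∑ k ∈ Finset.range (n+7), Nat.choose (4*n+12) k := by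
  intro n hn
  induction n, hn using Nat.le_induction with
  | base =>
      norm_num
      simp only [Nat.choose_eq_descFactorial_div_factorial]
      decide
  | succ n hn ih =>
      have h1 : 8*(n+2)*((n+1) * 2^(3*n+11)) < 8*(n+2)*(∑ k ∈ Finset.range (n+7), Nat.choose (4*n+12) k) := by
        exact (Nat.mul_lt_mul_left (by positivity)).mpr ih
      have h2 := step_ineq n hn
      have h3 : (n+1)*((n+2) * 2^(3*(n+1)+11)) < (n+1)*(∑ k ∈ Finset.range ((n+1)+7), Nat.choose (4*(n+1)+12) k) := by
        calc (n+1)*((n+2) * 2^(3*(n+1)+11)) = 8*(n+2)*((n+1) * 2^(3*n+11)) := by ring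
          _ < 8*(n+2)*(∑ k ∈ Finset.range (n+7), Nat.choose (4*n+12) k) := h1
          _ ≤ (n+1) * (∑ k ∈ Finset.range (n+8), Nat.choose (4*n+16) k) := h2
          _ = (n+1)*(∑ k ∈ Finset.range ((n+1)+7), Nat.choose (4*(n+1)+12) k) := by
              congr 2 <;> ring_nf
      exact Nat.lt_of_mul_lt_mul_left h3

lemma card_small_subsets (m K : ℕ) :
    ((Finset.range m).powerset.filter (fun s => s.card ≤ K)).card
      = ∑ k ∈ Finset.range (K+1), Nat.choose m k := by
  classical
  have h : (Finset.range m).powerset.filter (fun s => s.card ≤ K)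
      = (Finset.range (K+1)).biUnion (fun k => Finset.powersetCard k (Finset.range m)) := by
    ext s
    simp only [Finset.mem_filter, Finset.mem_powerset, Finset.mem_biUnion, Finset.mem_range,
      Finset.mem_powersetCard, Nat.lt_succ_iff]
    constructor
    · rintro ⟨h1, h2⟩; exact ⟨s.card, h2, h1, rfl⟩
    · rintro ⟨k, hk, h1, rfl⟩; exact ⟨h1, hk⟩
  rw [h, Finset.card_biUnion]
  · exact Finset.sum_congr rfl (fun k _ => by
      rw [Finset.card_powersetCard, Finset.card_range])
  · intro x _ y _ hxy
    rw [Function.onFun, Finset.disjoint_left]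
    intro s hx hy
    rw [Finset.mem_powersetCard] at hx hy
    exact hxy (hx.2 ▸ hy.2)
namespace RadAux

noncomputable def sgn (s : Finset ℕ) (i : ℕ) : ℝ := if i ∈ s then -1 else 1

variable {Ω : Type*} [MeasurableSpace Ω] {μ : Measure Ω} [IsProbabilityMeasure μ]
  {ε : ℕ → Ω → ℝ}

def atom (ε : ℕ → Ω → ℝ) (m : ℕ) (s : Finset ℕ) : Set Ω :=
  ⋂ i ∈ Finset.range m, ε i ⁻¹' {sgn s i}

lemma marg (hε : IsRademacherSeq μ ε) (i : ℕ) {c : ℝ} (hc : c = 1 ∨ c = -1) :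
    μ (ε i ⁻¹' {c}) = 1/2 := by
  have h1 : ε i ⁻¹' {c} = {ω | ε i ω = c} := by ext ω; simp [Set.mem_preimage]
  rcases hc with rfl | rfl
  · rw [h1]; exact (hε.2.2 i).1
  · rw [h1]; exact (hε.2.2 i).2

lemma atom_measurable (hε : IsRademacherSeq μ ε) (m : ℕ) (s : Finset ℕ) :
    MeasurableSet (atom ε m s) :=
  MeasurableSet.biInter (Set.to_countable _)
    (fun i _ => (hε.1 i) (measurableSet_singleton _))

lemma atom_prob (hε : IsRademacherSeq μ ε) (m : ℕ) (s : Finset ℕ) :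
    μ (atom ε m s) = (1/2 : ℝ≥0∞)^m := by
  rw [atom, hε.2.1.measure_inter_preimage_eq_mul (Finset.range m)
    (sets := fun i => ({sgn s i} : Set ℝ)) (fun i _ => measurableSet_singleton _)]
  rw [Finset.prod_congr rfl (fun i _ => marg hε i (by unfold sgn; split <;> simp))]
  simp

lemma atom_eq_of_mem {m : ℕ} {s s' : Finset ℕ} (hs : s ⊆ Finset.range m) (hs' : s' ⊆ Finset.range m)
    {ω : Ω} (h : ω ∈ atom ε m s) (h' : ω ∈ atom ε m s') : s = s' := by
  simp only [atom, Set.mem_iInter, Set.mem_preimage, Set.mem_singleton_iff] at h h'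
  ext i
  constructor
  · intro hi
    by_contra hi'
    have e1 := h i (hs hi)
    have e2 := h' i (hs hi)
    simp [sgn, hi, hi'] at e1 e2
    rw [e1] at e2; norm_num at e2
  · intro hi
    by_contra hi'
    have e1 := h i (hs' hi)
    have e2 := h' i (hs' hi)
    simp [sgn, hi, hi'] at e1 e2
    rw [e2] at e1; norm_num at e1

lemma union_atoms_prob (hε : IsRademacherSeq μ ε) (m : ℕ) (T : Finset (Finset ℕ))
    (hT : ∀ s ∈ T, s ⊆ Finset.range m) :
    μ (⋃ s ∈ T, atom ε m s) = T.card * (1/2 : ℝ≥0∞)^m := by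
  rw [measure_biUnion_finset ?hd (fun s _ => atom_measurable hε m s)]
  · rw [Finset.sum_congr rfl (fun s _ => atom_prob hε m s), Finset.sum_const, nsmul_eq_mul]
  case hd =>
    intro s hs s' hs' hne
    rw [Function.onFun]
    rw [Set.disjoint_left]
    intro ω h h'
    exact hne (atom_eq_of_mem (hT s hs) (hT s' hs') h h')

end RadAux

namespace RadAux
variable {Ω : Type*} [MeasurableSpace Ω] {μ : Measure Ω} [IsProbabilityMeasure μ]
  {ε : ℕ → Ω → ℝ}

def good (ε : ℕ → Ω → ℝ) (m : ℕ) : Set Ω :=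
  ⋂ i ∈ Finset.range m, (ε i ⁻¹' {1} ∪ ε i ⁻¹' {-1})

lemma good_compl_null (hε : IsRademacherSeq μ ε) (m : ℕ) :
    μ (good ε m)ᶜ = 0 := by
  have h1 : ∀ i : ℕ, μ (ε i ⁻¹' {1} ∪ ε i ⁻¹' {-1})ᶜ = 0 := by
    intro i
    have hu : μ (ε i ⁻¹' {1} ∪ ε i ⁻¹' {-1}) = 1 := by
      rw [measure_union ?_ ((hε.1 i) (measurableSet_singleton _))]
      · rw [marg hε i (Or.inl rfl), marg hε i (Or.inr rfl)]
        rw [ENNReal.div_add_div_same]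
        norm_num
        rw [ENNReal.div_self (by norm_num) (by norm_num)]
      · rw [Set.disjoint_left]
        intro ω h1 h2
        simp only [Set.mem_preimage, Set.mem_singleton_iff] at h1 h2
        rw [h1] at h2; norm_num at h2
    rw [measure_compl (((hε.1 i) (measurableSet_singleton _)).union
        ((hε.1 i) (measurableSet_singleton _))) (measure_ne_top μ _), hu, measure_univ,
      tsub_self]
  rw [good, Set.compl_iInter₂]
  exact measure_biUnion_null_iff (Set.to_countable _) |>.mpr (fun i _ => h1 i)

lemma mem_good_cases {m i : ℕ} {ω : Ω} (h : ω ∈ good ε m) (hi : i < m) :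
    ε i ω = 1 ∨ ε i ω = -1 := by
  simp only [good, Set.mem_iInter, Finset.mem_range] at h
  rcases h i hi with h' | h'
  · exact Or.inl h'
  · exact Or.inr h'

/-- on an atom, partial sums count the minus signs -/
lemma sum_on_atom {m r : ℕ} {s : Finset ℕ} (hrm : r ≤ m) (hs : s ⊆ Finset.range r)
    {ω : Ω} (h : ω ∈ atom ε m s) :
    ∑ i ∈ Finset.range r, ε i ω = (r : ℝ) - 2 * s.card := by
  simp only [atom, Set.mem_iInter, Set.mem_preimage, Set.mem_singleton_iff] at h
  have h1 : ∀ i ∈ Finset.range r, ε i ω = 1 - 2 * (if i ∈ s then (1:ℝ) else 0) := by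
    intro i hi
    rw [h i (Finset.mem_range.mpr (lt_of_lt_of_le (Finset.mem_range.mp hi) hrm))]
    unfold sgn; split <;> norm_num
  rw [Finset.sum_congr rfl h1, Finset.sum_sub_distrib, Finset.sum_const, Finset.card_range,
    ← Finset.mul_sum]
  have h2 : (∑ i ∈ Finset.range r, if i ∈ s then (1:ℝ) else 0)
      = (s.card : ℝ) := by
    rw [Finset.sum_ite_mem, Finset.inter_comm,
      Finset.inter_eq_left.mpr hs, Finset.sum_const]
    simp
  rw [h2]; simp

/-- the value ε m ω on an atom over range (m+1) -/
lemma last_on_atom {m : ℕ} {s : Finset ℕ} (hs : m ∉ s)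
    {ω : Ω} (h : ω ∈ atom ε (m+1) s) : ε m ω = 1 := by
  simp only [atom, Set.mem_iInter, Set.mem_preimage, Set.mem_singleton_iff] at h
  have := h m (Finset.self_mem_range_succ m)
  rwa [sgn, if_neg hs] at this

end RadAux

namespace RadAux
variable {Ω : Type*} [MeasurableSpace Ω] {μ : Measure Ω} [IsProbabilityMeasure μ]
  {ε : ℕ → Ω → ℝ}

lemma upper_via_atoms (hε : IsRademacherSeq μ ε) (m : ℕ) (E : Set Ω)
    (T : Finset (Finset ℕ)) (hT : ∀ s ∈ T, s ⊆ Finset.range m)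
    (hincl : ∀ ω ∈ E, ω ∈ good ε m → ∃ s ∈ T, ω ∈ atom ε m s) :
    μ E ≤ T.card * (1/2 : ℝ≥0∞)^m := by
  have hsub : E ⊆ (⋃ s ∈ T, atom ε m s) ∪ (good ε m)ᶜ := by
    intro ω hω
    by_cases hg : ω ∈ good ε m
    · obtain ⟨s, hs, ha⟩ := hincl ω hω hg
      exact Or.inl (Set.mem_biUnion hs ha)
    · exact Or.inr hg
  calc μ E ≤ μ ((⋃ s ∈ T, atom ε m s) ∪ (good ε m)ᶜ) := measure_mono hsub
    _ ≤ μ (⋃ s ∈ T, atom ε m s) + μ (good ε m)ᶜ := measure_union_le _ _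
    _ = T.card * (1/2 : ℝ≥0∞)^m := by
        rw [good_compl_null hε m, add_zero, union_atoms_prob hε m T hT]

lemma lower_via_atoms (hε : IsRademacherSeq μ ε) (m : ℕ) (E : Set Ω)
    (T : Finset (Finset ℕ)) (hT : ∀ s ∈ T, s ⊆ Finset.range m)
    (hincl : ∀ s ∈ T, atom ε m s ⊆ E) :
    T.card * (1/2 : ℝ≥0∞)^m ≤ μ E := by
  rw [← union_atoms_prob hε m T hT]
  exact measure_mono (Set.iUnion₂_subset hincl)

lemma sum_on_good {m r : ℕ} (hrm : r ≤ m) {ω : Ω} (h : ω ∈ good ε m) :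
    ∑ i ∈ Finset.range r, ε i ω
      = (r : ℝ) - 2 * (((Finset.range r).filter (fun i => ε i ω = -1)).card : ℝ) := by
  classical
  have h1 : ∀ i ∈ Finset.range r, ε i ω = 1 - 2 * (if ε i ω = -1 then (1:ℝ) else 0) := by
    intro i hi
    rcases mem_good_cases h (lt_of_lt_of_le (Finset.mem_range.mp hi) hrm) with h' | h'
    · rw [h', if_neg (by norm_num)]; norm_num
    · rw [h', if_pos rfl]; norm_num
  rw [Finset.sum_congr rfl h1, Finset.sum_sub_distrib, Finset.sum_const, Finset.card_range,
    ← Finset.mul_sum, Finset.sum_ite, Finset.sum_const, Finset.sum_const]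
  simp

end RadAux

theorem rademacher_zhubr_lt_Meq {Ω : Type*} [MeasurableSpace Ω] (μ : MeasureTheory.Measure Ω)
    [MeasureTheory.IsProbabilityMeasure μ] (ε : ℕ → Ω → ℝ) (hε : IsRademacherSeq μ ε)
    (n : ℕ) (hn : 16 ≤ n) :
    fTail μ ε n (1 / Real.sqrt ((n : ℝ) - 3 + 4 / n)) (Real.sqrt ((n : ℝ) - 3 + 4 / n)) <
      Meq μ ε (Real.sqrt ((n : ℝ) - 3 + 4 / n)) := by
  classical
  have hn' : (16:ℝ) ≤ (n:ℝ) := by exact_mod_cast hn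
  have hn0 : (0:ℝ) < n := by linarith
  have hn0' : (n:ℝ) ≠ 0 := ne_of_gt hn0
  have hargpos : (0:ℝ) < (n : ℝ) - 3 + 4 / n := by
    have h4 : (0:ℝ) < 4 / n := by positivity
    linarith
  set x := Real.sqrt ((n : ℝ) - 3 + 4 / n) with hxdef
  have hxpos : 0 < x := Real.sqrt_pos.mpr hargpos
  have hxsq : x^2 = (n:ℝ)-3+4/n := Real.sq_sqrt hargpos.le
  have hx0 : x ≠ 0 := ne_of_gt hxpos
  have hxsqn : x^2 * (n:ℝ) = (n:ℝ)^2 - 3*n + 4 := by rw [hxsq]; field_simp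
  have hcoef : Real.sqrt ((1 - (1/x)^2)/(n:ℝ)) = ((n:ℝ)-2)/(n*x) := by
    have h1 : (1 - (1/x)^2)/(n:ℝ) = (((n:ℝ)-2)/(n*x))^2 := by
      field_simp
      linear_combination hxsqn
    rw [h1, Real.sqrt_sq (div_nonneg (by linarith) (by positivity))]
  -- ### Part A : upper bound for fTail
  set Tf := (Finset.range n).powerset.filter (fun s => s.card ≤ 1) with hTf
  have hcardTf : Tf.card = n+1 := by
    rw [hTf, card_small_subsets n 1, Finset.sum_range_succ, Finset.sum_range_one]
    simp [Nat.choose_one_right]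
    omega
  have hfU : μ {ω | x ≤ Real.sqrt ((1 - (1/x) ^ 2) / (n:ℝ)) * (∑ i ∈ Finset.range n, ε i ω)
        + (1/x) * ε n ω} ≤ ((n+1 : ℕ) : ℝ≥0∞) * (1/2)^(n+1) := by
    have key := RadAux.upper_via_atoms hε (n+1)
      {ω | x ≤ Real.sqrt ((1 - (1/x) ^ 2) / (n:ℝ)) * (∑ i ∈ Finset.range n, ε i ω)
        + (1/x) * ε n ω} Tf ?subset ?incl
    · rw [hcardTf] at key; exact_mod_cast key
    case subset =>
      intro s hs
      rw [hTf, Finset.mem_filter, Finset.mem_powerset] at hs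
      exact hs.1.trans (Finset.range_subset_range.mpr (Nat.le_succ n))
    case incl =>
      intro ω hω hg
      set s0 := (Finset.range n).filter (fun i => ε i ω = -1) with hs0
      set k := s0.card with hk
      have hsum : ∑ i ∈ Finset.range n, ε i ω = (n:ℝ) - 2*(k:ℝ) :=
        RadAux.sum_on_good (Nat.le_succ n) hg
      have hkn : (k:ℝ) ≤ (n:ℝ) := by
        have h1 : k ≤ n := le_trans (Finset.card_filter_le _ _) (le_of_eq (Finset.card_range n))
        exact_mod_cast h1
      have hk0 : (0:ℝ) ≤ (k:ℝ) := Nat.cast_nonneg k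
      have hεncase := RadAux.mem_good_cases hg (Nat.lt_succ_self n)
      rw [Set.mem_setOf_eq, hcoef, hsum] at hω
      have hnx : (0:ℝ) < (n:ℝ)*x := by positivity
      have e2 : (n:ℝ)*x*(((n:ℝ)-2)/((n:ℝ)*x)*((n:ℝ)-2*(k:ℝ)) + (1/x)*ε n ω)
          = ((n:ℝ)-2)*((n:ℝ)-2*(k:ℝ)) + (n:ℝ)*ε n ω := by field_simp
      have hmul := mul_le_mul_of_nonneg_left hω hnx.le
      rw [e2] at hmul
      have e1 : (n:ℝ)*x*x = (n:ℝ)^2-3*(n:ℝ)+4 := by linear_combination hxsqn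
      have hmain : (n:ℝ)^2 - 3*(n:ℝ) + 4 ≤ ((n:ℝ)-2)*((n:ℝ)-2*(k:ℝ)) + (n:ℝ) * ε n ω := by
        rw [← e1]; exact hmul
      have hεn1 : ε n ω = 1 := by
        rcases hεncase with h1 | h1
        · exact h1
        · exfalso; rw [h1] at hmain
          nlinarith [mul_nonneg hk0 (show (0:ℝ) ≤ (n:ℝ)-2 by linarith)]
      have hk1 : k ≤ 1 := by
        rw [hεn1] at hmain
        by_contra hcon
        have h2 : (2:ℝ) ≤ (k:ℝ) := by exact_mod_cast Nat.succ_le_of_lt (Nat.lt_of_not_le hcon)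
        nlinarith [mul_le_mul_of_nonneg_left h2 (show (0:ℝ) ≤ (n:ℝ)-2 by linarith)]
      refine ⟨s0, ?_, ?_⟩
      · rw [hTf, Finset.mem_filter, Finset.mem_powerset]
        exact ⟨Finset.filter_subset _ _, hk1⟩
      · simp only [RadAux.atom, Set.mem_iInter, Set.mem_preimage, Set.mem_singleton_iff]
        intro i hi
        unfold RadAux.sgn
        by_cases his : i ∈ s0
        · rw [if_pos his]; exact (Finset.mem_filter.mp his).2
        · rw [if_neg his]
          rcases Nat.lt_succ_iff_lt_or_eq.mp (Finset.mem_range.mp hi) with hlt | heq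
          · rcases RadAux.mem_good_cases hg (Nat.lt_succ_of_lt hlt) with h1 | h1
            · exact h1
            · exact absurd (Finset.mem_filter.mpr ⟨Finset.mem_range.mpr hlt, h1⟩) his
          · rw [heq]; exact hεn1
  -- ### Part B : lower bound for eqTail at j = 4n+12
  set T2 := (Finset.range (4*n+12)).powerset.filter (fun s => s.card ≤ n+6) with hT2
  have hlow : ((∑ k ∈ Finset.range (n+7), Nat.choose (4*n+12) k : ℕ) : ℝ≥0∞) * (1/2)^(4*n+12)
      ≤ μ {ω | x ≤ (∑ i ∈ Finset.range (4*n+12), ε i ω) / Real.sqrt ((4*n+12 : ℕ) : ℝ)} := by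
    have hcardT2 : T2.card = ∑ k ∈ Finset.range (n+7), Nat.choose (4*n+12) k := by
      rw [hT2, card_small_subsets]
    have key := RadAux.lower_via_atoms hε (4*n+12)
      {ω | x ≤ (∑ i ∈ Finset.range (4*n+12), ε i ω) / Real.sqrt ((4*n+12 : ℕ) : ℝ)} T2
      ?subset2 ?incl2
    · rw [hcardT2] at key; exact_mod_cast key
    case subset2 =>
      intro s hs
      rw [hT2, Finset.mem_filter, Finset.mem_powerset] at hs
      exact hs.1
    case incl2 =>
      intro s hs ω hω
      rw [hT2, Finset.mem_filter, Finset.mem_powerset] at hs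
      have hsum := RadAux.sum_on_atom (le_refl (4*n+12)) hs.1 hω
      rw [Set.mem_setOf_eq, hsum]
      have hjpos : (0:ℝ) < ((4*n+12 : ℕ) : ℝ) := by positivity
      rw [le_div_iff₀ (Real.sqrt_pos.mpr hjpos)]
      have hthr : x * Real.sqrt ((4*n+12 : ℕ) : ℝ) ≤ 2*(n:ℝ) := by
        rw [hxdef, ← Real.sqrt_mul hargpos.le]
        have harg2 : ((n:ℝ) - 3 + 4/n) * ((4*n+12 : ℕ) : ℝ) ≤ (2*(n:ℝ))^2 := by
          have hrw : (n:ℝ) - 3 + 4/n = ((n:ℝ)^2-3*n+4)/n := by field_simp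
          rw [hrw, div_mul_eq_mul_div, div_le_iff₀ hn0]
          push_cast
          nlinarith
        calc Real.sqrt (((n:ℝ) - 3 + 4/n) * ((4*n+12 : ℕ) : ℝ))
            ≤ Real.sqrt ((2*(n:ℝ))^2) := Real.sqrt_le_sqrt harg2
          _ = 2*(n:ℝ) := Real.sqrt_sq (by positivity)
      have hcs : (s.card : ℝ) ≤ (n:ℝ)+6 := by exact_mod_cast hs.2
      have : 2*(n:ℝ) ≤ ((4*n+12 : ℕ) : ℝ) - 2 * s.card := by push_cast; linarith
      linarith
  -- ### Part C : numeric comparison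
  have hnum : ((n+1 : ℕ) : ℝ) * (1/2)^(n+1)
      < ((∑ k ∈ Finset.range (n+7), Nat.choose (4*n+12) k : ℕ) : ℝ) * (1/2)^(4*n+12) := by
    have hkey := key_count n hn
    have hcast : ((n+1 : ℕ) : ℝ) * 2^(3*n+11)
        < ((∑ k ∈ Finset.range (n+7), Nat.choose (4*n+12) k : ℕ) : ℝ) := by
      exact_mod_cast hkey
    have h2p : (0:ℝ) < 2^(n+1) := by positivity
    have h2p2 : (0:ℝ) < 2^(4*n+12) := by positivity
    rw [show ((1:ℝ)/2)^(n+1) = 1/2^(n+1) by rw [div_pow]; norm_num,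
        show ((1:ℝ)/2)^(4*n+12) = 1/2^(4*n+12) by rw [div_pow]; norm_num,
        mul_one_div, mul_one_div, div_lt_div_iff₀ h2p h2p2]
    have hp : (2:ℝ)^(4*n+12) = 2^(n+1) * 2^(3*n+11) := by
      rw [← pow_add]; congr 1; ring
    rw [hp]
    calc ((n+1 : ℕ) : ℝ) * (2^(n+1) * 2^(3*n+11))
        = (((n+1 : ℕ) : ℝ) * 2^(3*n+11)) * 2^(n+1) := by ring
      _ < _ := by exact mul_lt_mul_of_pos_right hcast h2p
  -- ### Part D : assemble
  have hfR : fTail μ ε n (1/x) x ≤ ((n+1 : ℕ) : ℝ) * (1/2)^(n+1) := by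
    unfold fTail
    have hne : (((n+1 : ℕ) : ℝ≥0∞) * (1/2)^(n+1)) ≠ ⊤ := by
      apply ENNReal.mul_ne_top (by simp)
      exact ENNReal.pow_ne_top (by norm_num)
    have := ENNReal.toReal_mono hne hfU
    rw [ENNReal.toReal_mul, ENNReal.toReal_pow, show (((n+1:ℕ) : ℝ≥0∞)).toReal = ((n+1:ℕ):ℝ) from rfl] at this
    norm_num at this ⊢
    convert this using 3
  have heR : ((∑ k ∈ Finset.range (n+7), Nat.choose (4*n+12) k : ℕ) : ℝ) * (1/2)^(4*n+12)
      ≤ eqTail μ ε (4*n+12) x := by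
    unfold eqTail
    have := ENNReal.toReal_mono (measure_ne_top μ _) hlow
    rw [ENNReal.toReal_mul, ENNReal.toReal_pow, show (((∑ k ∈ Finset.range (n+7), Nat.choose (4*n+12) k : ℕ) : ℝ≥0∞)).toReal = ((∑ k ∈ Finset.range (n+7), Nat.choose (4*n+12) k : ℕ):ℝ) from rfl] at this
    norm_num at this ⊢
    convert this using 3
  have hM : eqTail μ ε (4*n+12) x ≤ Meq μ ε x := by
    unfold Meq
    apply le_csSup
    · refine ⟨1, ?_⟩
      rintro p ⟨m, hm, rfl⟩
      unfold eqTail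
      have h1 : (μ {ω | x ≤ (∑ i ∈ Finset.range m, ε i ω) / Real.sqrt m}).toReal
          ≤ (1 : ℝ≥0∞).toReal :=
        ENNReal.toReal_mono ENNReal.one_ne_top prob_le_one
      simpa using h1
    · exact ⟨4*n+12, by omega, rfl⟩
  calc fTail μ ε n (1/x) x ≤ ((n+1 : ℕ) : ℝ) * (1/2)^(n+1) := hfR
    _ < ((∑ k ∈ Finset.range (n+7), Nat.choose (4*n+12) k : ℕ) : ℝ) * (1/2)^(4*n+12) := hnum
    _ ≤ eqTail μ ε (4*n+12) x := heR
    _ ≤ Meq μ ε x := hM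
end
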